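/- arXiv:2312.14308 — 4 statements merged into one kernel-verified Lean document; each statement's English description precedes it below -/
import Mathlib

section
/- The fourth partial derivative of F_beta in direction e_i equals beta^3 * (E_{mu_x}[(l_i - E_{mu_x} l_i)^4] - 3*(Var_{mu_x} l_i)^2), and hence |partial_i^4 F_beta(x)| <= 26 * beta^3 * E_{mu_x}[l_i^4] <= 26 * beta^3 * max_{t in T} |t_i|^4. -/
open Finset

theorem lse_aux {ι : Type*} (T : Finset ι) (hT : T.Nonempty) (β : ℝ) (hβ : β ≠ 0)
    (a b : ι → ℝ) (ha : ∀ t ∈ T, 0 < a t) :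
    iteratedDeriv 4 (fun s => (1 / β) * Real.log (∑ t ∈ T, a t * Real.exp (β * b t * s)))
      = fun s =>
        β ^ 3 * ((∑ t ∈ T, a t * b t ^ 4 * Real.exp (β * b t * s)) *
            (∑ t ∈ T, a t * b t ^ 0 * Real.exp (β * b t * s)) ^ 3
          - 4 * (∑ t ∈ T, a t * b t ^ 3 * Real.exp (β * b t * s)) *
            (∑ t ∈ T, a t * b t ^ 1 * Real.exp (β * b t * s)) *
            (∑ t ∈ T, a t * b t ^ 0 * Real.exp (β * b t * s)) ^ 2
          - 3 * (∑ t ∈ T, a t * b t ^ 2 * Real.exp (β * b t * s)) ^ 2 *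
            (∑ t ∈ T, a t * b t ^ 0 * Real.exp (β * b t * s)) ^ 2
          + 12 * (∑ t ∈ T, a t * b t ^ 2 * Real.exp (β * b t * s)) *
            (∑ t ∈ T, a t * b t ^ 1 * Real.exp (β * b t * s)) ^ 2 *
            (∑ t ∈ T, a t * b t ^ 0 * Real.exp (β * b t * s))
          - 6 * (∑ t ∈ T, a t * b t ^ 1 * Real.exp (β * b t * s)) ^ 4)
          / (∑ t ∈ T, a t * b t ^ 0 * Real.exp (β * b t * s)) ^ 4 := by
  set Z : ℕ → ℝ → ℝ := fun k s => ∑ t ∈ T, a t * b t ^ k * Real.exp (β * b t * s) with hZ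
  have hZpos : ∀ s, 0 < Z 0 s := by
    intro s
    apply Finset.sum_pos _ hT
    intro t ht
    have := ha t ht
    positivity
  have hZne : ∀ s, Z 0 s ≠ 0 := fun s => (hZpos s).ne'
  have hZd : ∀ k s, HasDerivAt (Z k) (β * Z (k + 1) s) s := by
    intro k s
    have h : ∀ t ∈ T, HasDerivAt (fun s => a t * b t ^ k * Real.exp (β * b t * s))
        (β * (a t * b t ^ (k + 1) * Real.exp (β * b t * s))) s := by
      intro t _
      have h1 : HasDerivAt (fun s : ℝ => β * b t * s) (β * b t) s := by
        simpa using (hasDerivAt_id s).const_mul (β * b t)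
      have h2 := (h1.exp).const_mul (a t * b t ^ k)
      refine h2.congr_deriv ?_
      ring
    have hsum := HasDerivAt.fun_sum h
    rw [← Finset.mul_sum] at hsum
    exact hsum
  have hG0 : (fun s => (1 / β) * Real.log (∑ t ∈ T, a t * Real.exp (β * b t * s)))
      = fun s => (1 / β) * Real.log (Z 0 s) := by
    funext s
    simp [hZ]
  rw [hG0]
  -- the four derivative levels
  set g1 : ℝ → ℝ := fun s => Z 1 s / Z 0 s with hg1
  set g2 : ℝ → ℝ := fun s => β * ((Z 2 s * Z 0 s - Z 1 s ^ 2) / Z 0 s ^ 2) with hg2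
  set g3 : ℝ → ℝ := fun s => β ^ 2 *
    ((Z 3 s * Z 0 s ^ 2 - 3 * Z 2 s * Z 1 s * Z 0 s + 2 * Z 1 s ^ 3) / Z 0 s ^ 3) with hg3
  have hd1 : ∀ s, HasDerivAt (fun s => (1 / β) * Real.log (Z 0 s)) (g1 s) s := by
    intro s
    have := ((hZd 0 s).log (hZne s)).const_mul (1 / β)
    refine this.congr_deriv ?_
    field_simp [hg1]
    rfl
  have hd2 : ∀ s, HasDerivAt g1 (g2 s) s := by
    intro s
    have := (hZd 1 s).div (hZd 0 s) (hZne s)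
    refine this.congr_deriv ?_
    field_simp [hg2]
    ring
  have hd3 : ∀ s, HasDerivAt g2 (g3 s) s := by
    intro s
    have hnum : HasDerivAt (fun s => Z 2 s * Z 0 s - Z 1 s ^ 2)
        ((β * Z 3 s) * Z 0 s + Z 2 s * (β * Z 1 s) - 2 * Z 1 s ^ 1 * (β * Z 2 s)) s :=
      ((hZd 2 s).mul (hZd 0 s)).sub ((hZd 1 s).pow 2)
    have hden : HasDerivAt (fun s => Z 0 s ^ 2) (2 * Z 0 s ^ 1 * (β * Z 1 s)) s :=
      (hZd 0 s).pow 2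
    have := ((hnum.div hden (pow_ne_zero 2 (hZne s)))).const_mul β
    refine this.congr_deriv ?_
    rw [hg3]
    have h0 := hZne s
    field_simp
    ring
  have hd4 : ∀ s, HasDerivAt g3
      (β ^ 3 * ((Z 4 s * Z 0 s ^ 3 - 4 * Z 3 s * Z 1 s * Z 0 s ^ 2 - 3 * Z 2 s ^ 2 * Z 0 s ^ 2
        + 12 * Z 2 s * Z 1 s ^ 2 * Z 0 s - 6 * Z 1 s ^ 4) / Z 0 s ^ 4)) s := by
    intro s
    have hnum : HasDerivAt (fun s => Z 3 s * Z 0 s ^ 2 - 3 * Z 2 s * Z 1 s * Z 0 s + 2 * Z 1 s ^ 3)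
        ((β * Z 4 s) * Z 0 s ^ 2 + Z 3 s * (2 * Z 0 s ^ 1 * (β * Z 1 s))
          - ((3 * (β * Z 3 s) * Z 1 s + 3 * Z 2 s * (β * Z 2 s)) * Z 0 s
             + 3 * Z 2 s * Z 1 s * (β * Z 1 s))
          + 2 * (3 * Z 1 s ^ 2 * (β * Z 2 s))) s := by
      have h1 : HasDerivAt (fun s => Z 3 s * Z 0 s ^ 2)
          ((β * Z 4 s) * Z 0 s ^ 2 + Z 3 s * (2 * Z 0 s ^ 1 * (β * Z 1 s))) s :=
        (hZd 3 s).mul ((hZd 0 s).pow 2)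
      have h2 : HasDerivAt (fun s => 3 * Z 2 s * Z 1 s * Z 0 s)
          ((3 * (β * Z 3 s) * Z 1 s + 3 * Z 2 s * (β * Z 2 s)) * Z 0 s
             + 3 * Z 2 s * Z 1 s * (β * Z 1 s)) s :=
        ((((hZd 2 s).const_mul 3).mul (hZd 1 s)).mul (hZd 0 s))
      have h3 : HasDerivAt (fun s => 2 * Z 1 s ^ 3) (2 * (3 * Z 1 s ^ 2 * (β * Z 2 s))) s := by
        simpa using ((hZd 1 s).pow 3).const_mul 2
      exact (h1.sub h2).add h3
    have hden : HasDerivAt (fun s => Z 0 s ^ 3) (3 * Z 0 s ^ 2 * (β * Z 1 s)) s := by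
      exact (hZd 0 s).pow 3
    have := ((hnum.div hden (pow_ne_zero 3 (hZne s)))).const_mul (β ^ 2)
    refine this.congr_deriv ?_
    have h0 := hZne s
    field_simp
    ring
  have e1 : iteratedDeriv 1 (fun s => (1 / β) * Real.log (Z 0 s)) = g1 := by
    rw [iteratedDeriv_one]; exact funext fun s => (hd1 s).deriv
  have e2 : iteratedDeriv 2 (fun s => (1 / β) * Real.log (Z 0 s)) = g2 := by
    rw [show (2 : ℕ) = 1 + 1 from rfl, iteratedDeriv_succ, e1]
    exact funext fun s => (hd2 s).deriv
  have e3 : iteratedDeriv 3 (fun s => (1 / β) * Real.log (Z 0 s)) = g3 := by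
    rw [show (3 : ℕ) = 2 + 1 from rfl, iteratedDeriv_succ, e2]
    exact funext fun s => (hd3 s).deriv
  have e4 : iteratedDeriv 4 (fun s => (1 / β) * Real.log (Z 0 s))
      = deriv (iteratedDeriv 3 fun s => (1 / β) * Real.log (Z 0 s)) := iteratedDeriv_succ
  rw [e4, e3]
  funext s
  rw [(hd4 s).deriv]
  simp only [hZ]
  rw [mul_div_assoc]


theorem bound_aux {ι : Type*} (T : Finset ι) (w f : ι → ℝ)
    (hwn : ∀ t ∈ T, 0 ≤ w t) (hw1 : ∑ t ∈ T, w t = 1) :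
    |(∑ t ∈ T, w t * (f t - ∑ u ∈ T, w u * f u) ^ 4)
        - 3 * ((∑ t ∈ T, w t * f t ^ 2) - (∑ t ∈ T, w t * f t) ^ 2) ^ 2|
      ≤ 26 * ∑ t ∈ T, w t * f t ^ 4 := by
  have hcs : ∀ g : ι → ℝ, (∑ t ∈ T, w t * g t) ^ 2 ≤ ∑ t ∈ T, w t * g t ^ 2 := by
    intro g
    have h := Finset.sum_mul_sq_le_sq_mul_sq T (fun t => Real.sqrt (w t))
      (fun t => Real.sqrt (w t) * g t)
    have e1 : ∀ t ∈ T, Real.sqrt (w t) * (Real.sqrt (w t) * g t) = w t * g t := by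
      intro t ht; rw [← mul_assoc, Real.mul_self_sqrt (hwn t ht)]
    have e2 : ∀ t ∈ T, Real.sqrt (w t) ^ 2 = w t := fun t ht => Real.sq_sqrt (hwn t ht)
    have e3 : ∀ t ∈ T, (Real.sqrt (w t) * g t) ^ 2 = w t * g t ^ 2 := by
      intro t ht; rw [mul_pow, e2 t ht]
    rw [Finset.sum_congr rfl e1, Finset.sum_congr rfl e2, Finset.sum_congr rfl e3,
      hw1, one_mul] at h
    exact h
  have hs4nn : 0 ≤ ∑ t ∈ T, w t * f t ^ 4 :=
    Finset.sum_nonneg fun t ht => mul_nonneg (hwn t ht) (by positivity)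
  have hs2nn : 0 ≤ ∑ t ∈ T, w t * f t ^ 2 :=
    Finset.sum_nonneg fun t ht => mul_nonneg (hwn t ht) (sq_nonneg _)
  have hc2 : (∑ t ∈ T, w t * f t) ^ 2 ≤ ∑ t ∈ T, w t * f t ^ 2 := hcs f
  have hs2s4 : (∑ t ∈ T, w t * f t ^ 2) ^ 2 ≤ ∑ t ∈ T, w t * f t ^ 4 := by
    have h := hcs (fun t => f t ^ 2)
    have e : ∀ t ∈ T, w t * (f t ^ 2) ^ 2 = w t * f t ^ 4 := by intro t _; ring
    rwa [Finset.sum_congr rfl e] at h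
  have hc4 : (∑ t ∈ T, w t * f t) ^ 4 ≤ ∑ t ∈ T, w t * f t ^ 4 := by
    have h1 : ((∑ t ∈ T, w t * f t) ^ 2) ^ 2 ≤ (∑ t ∈ T, w t * f t ^ 2) ^ 2 :=
      pow_le_pow_left₀ (sq_nonneg _) hc2 2
    calc (∑ t ∈ T, w t * f t) ^ 4 = ((∑ t ∈ T, w t * f t) ^ 2) ^ 2 := by ring
      _ ≤ (∑ t ∈ T, w t * f t ^ 2) ^ 2 := h1
      _ ≤ ∑ t ∈ T, w t * f t ^ 4 := hs2s4
  have hm4nn : 0 ≤ ∑ t ∈ T, w t * (f t - ∑ u ∈ T, w u * f u) ^ 4 :=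
    Finset.sum_nonneg fun t ht => mul_nonneg (hwn t ht) (by positivity)
  have hm4le : (∑ t ∈ T, w t * (f t - ∑ u ∈ T, w u * f u) ^ 4)
      ≤ 16 * ∑ t ∈ T, w t * f t ^ 4 := by
    have hterm : ∀ t ∈ T, w t * (f t - ∑ u ∈ T, w u * f u) ^ 4
        ≤ 8 * (w t * f t ^ 4) + (8 * (∑ u ∈ T, w u * f u) ^ 4) * w t := by
      intro t ht
      have h48 : (f t - ∑ u ∈ T, w u * f u) ^ 4
          ≤ 8 * f t ^ 4 + 8 * (∑ u ∈ T, w u * f u) ^ 4 := by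
        nlinarith [sq_nonneg (f t + ∑ u ∈ T, w u * f u), sq_nonneg (f t - ∑ u ∈ T, w u * f u),
          sq_nonneg (f t ^ 2 - (∑ u ∈ T, w u * f u) ^ 2),
          sq_nonneg (f t ^ 2 + (∑ u ∈ T, w u * f u) ^ 2),
          sq_nonneg (f t * ∑ u ∈ T, w u * f u)]
      nlinarith [mul_le_mul_of_nonneg_left h48 (hwn t ht)]
    calc (∑ t ∈ T, w t * (f t - ∑ u ∈ T, w u * f u) ^ 4)
        ≤ ∑ t ∈ T, (8 * (w t * f t ^ 4) + (8 * (∑ u ∈ T, w u * f u) ^ 4) * w t) :=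
          Finset.sum_le_sum hterm
      _ = 8 * (∑ t ∈ T, w t * f t ^ 4) + 8 * (∑ u ∈ T, w u * f u) ^ 4 := by
          rw [Finset.sum_add_distrib, ← Finset.mul_sum, ← Finset.mul_sum, hw1, mul_one]
      _ ≤ 16 * ∑ t ∈ T, w t * f t ^ 4 := by nlinarith
  have hvnn : 0 ≤ (∑ t ∈ T, w t * f t ^ 2) - (∑ t ∈ T, w t * f t) ^ 2 := sub_nonneg.mpr hc2
  have hv2 : ((∑ t ∈ T, w t * f t ^ 2) - (∑ t ∈ T, w t * f t) ^ 2) ^ 2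
      ≤ ∑ t ∈ T, w t * f t ^ 4 := by
    have h1 : ((∑ t ∈ T, w t * f t ^ 2) - (∑ t ∈ T, w t * f t) ^ 2) ^ 2
        ≤ (∑ t ∈ T, w t * f t ^ 2) ^ 2 := by
      nlinarith [mul_nonneg (sq_nonneg (∑ t ∈ T, w t * f t)) hvnn,
        mul_nonneg (sq_nonneg (∑ t ∈ T, w t * f t)) hs2nn]
    exact h1.trans hs2s4
  rw [abs_le]
  constructor
  · nlinarith
  · nlinarith


/-- The fourth partial derivative of `F_β` in direction `e_i` equals
`β³ (E_{μ_x}[(ℓ_i - E ℓ_i)⁴] - 3 (Var ℓ_i)²)`; hence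
`|∂_i⁴ F_β(x)| ≤ 26 β³ E_{μ_x}[ℓ_i⁴] ≤ 26 β³ max_{t∈T} |t_i|⁴`. -/
theorem Fbeta_fourth_partial (n : ℕ) (T : Finset (Fin n → ℝ)) (hT : T.Nonempty)
    (β : ℝ) (hβ : 0 < β)
    (F : (Fin n → ℝ) → ℝ)
    (hF : F = fun x => (1 / β) * Real.log (∑ t ∈ T, Real.exp (β * ∑ j, x j * t j)))
    (w : (Fin n → ℝ) → (Fin n → ℝ) → ℝ)
    (hw : w = fun x t =>
      Real.exp (β * ∑ j, x j * t j) / ∑ u ∈ T, Real.exp (β * ∑ j, x j * u j)) :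
    ∀ (x : Fin n → ℝ) (i : Fin n),
      iteratedDeriv 4 (fun s => F (Function.update x i s)) (x i) =
        β ^ 3 * ((∑ t ∈ T, w x t * (t i - ∑ u ∈ T, w x u * u i) ^ 4) -
          3 * ((∑ t ∈ T, w x t * (t i) ^ 2) - (∑ t ∈ T, w x t * t i) ^ 2) ^ 2) ∧
      |iteratedDeriv 4 (fun s => F (Function.update x i s)) (x i)| ≤
        26 * β ^ 3 * ∑ t ∈ T, w x t * (t i) ^ 4 ∧
      26 * β ^ 3 * (∑ t ∈ T, w x t * (t i) ^ 4) ≤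
        26 * β ^ 3 * T.sup' hT fun t => |t i| ^ 4 := by
  intro x i
  -- basic weight facts
  have hwn : ∀ t ∈ T, 0 ≤ w x t := by
    intro t _
    rw [hw]
    exact div_nonneg (Real.exp_pos _).le (Finset.sum_nonneg fun u _ => (Real.exp_pos _).le)
  set W : (Fin n → ℝ) → ℝ := fun t => Real.exp (β * ∑ j, x j * t j) with hWdef
  have hQpos : 0 < ∑ u ∈ T, W u := Finset.sum_pos (fun u _ => Real.exp_pos _) hT
  have hwt : ∀ t, w x t = W t / ∑ u ∈ T, W u := by
    intro t; rw [hw]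
  have hw1 : ∑ t ∈ T, w x t = 1 := by
    have h : ∑ t ∈ T, w x t = (∑ t ∈ T, W t) / (∑ u ∈ T, W u) := by
      rw [Finset.sum_div]; exact Finset.sum_congr rfl fun t _ => hwt t
    rw [h, div_self hQpos.ne']
  -- rewrite the slice function in log-sum-exp form
  set a : (Fin n → ℝ) → ℝ := fun t => Real.exp (β * ((∑ j, x j * t j) - x i * t i)) with hadef
  have hsum : ∀ (s : ℝ) (t : Fin n → ℝ),
      (∑ j, Function.update x i s j * t j) = s * t i + ((∑ j, x j * t j) - x i * t i) := by
    intro s t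
    rw [Finset.sum_eq_add_sum_sdiff_singleton_of_mem (Finset.mem_univ i)
        (fun j => Function.update x i s j * t j),
      Finset.sum_eq_add_sum_sdiff_singleton_of_mem (Finset.mem_univ i) (fun j => x j * t j)]
    have h : ∀ j ∈ Finset.univ \ {i}, Function.update x i s j * t j = x j * t j := by
      intro j hj
      rw [Function.update_of_ne (by simpa using (Finset.mem_sdiff.mp hj).2)]
    rw [Finset.sum_congr rfl h, Function.update_self]
    ring
  have hG : (fun s => F (Function.update x i s))
      = fun s => (1 / β) * Real.log (∑ t ∈ T, a t * Real.exp (β * t i * s)) := by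
    funext s
    rw [hF]
    simp only
    congr 2
    apply Finset.sum_congr rfl
    intro t _
    rw [hsum s t, hadef, ← Real.exp_add]
    congr 1
    ring
  have hlse := lse_aux T hT β hβ.ne' a (fun t => t i) (fun t _ => Real.exp_pos _)
  -- identify the Z-sums at s = x i with moments
  have hW' : ∀ t, a t * Real.exp (β * t i * x i) = W t := by
    intro t
    rw [hadef, hWdef, ← Real.exp_add]
    congr 1
    ring
  have hPk : ∀ k : ℕ, (∑ t ∈ T, a t * t i ^ k * Real.exp (β * t i * x i))
      = (∑ t ∈ T, w x t * t i ^ k) * ∑ u ∈ T, W u := by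
    intro k
    have h1 : (∑ t ∈ T, a t * t i ^ k * Real.exp (β * t i * x i))
        = ∑ t ∈ T, t i ^ k * W t := by
      apply Finset.sum_congr rfl
      intro t _
      rw [← hW' t]; ring
    have h2 : (∑ t ∈ T, w x t * t i ^ k) = (∑ t ∈ T, t i ^ k * W t) / ∑ u ∈ T, W u := by
      rw [Finset.sum_div]
      apply Finset.sum_congr rfl
      intro t _
      rw [hwt t]; ring
    rw [h1, h2, div_mul_cancel₀ _ hQpos.ne']
  have h0 : (∑ t ∈ T, a t * t i ^ 0 * Real.exp (β * t i * x i)) = ∑ u ∈ T, W u := by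
    rw [hPk 0]
    have : (∑ t ∈ T, w x t * t i ^ 0) = 1 := by
      simpa [pow_zero, mul_one] using hw1
    rw [this, one_mul]
  -- central moment expansion
  set c : ℝ := ∑ u ∈ T, w x u * u i with hc
  have hcent : (∑ t ∈ T, w x t * (t i - c) ^ 4)
      = (∑ t ∈ T, w x t * t i ^ 4) - 4 * c * (∑ t ∈ T, w x t * t i ^ 3)
        + 6 * c ^ 2 * (∑ t ∈ T, w x t * t i ^ 2) - 4 * c ^ 3 * (∑ t ∈ T, w x t * t i)
        + c ^ 4 := by
    have expand : ∀ t ∈ T, w x t * (t i - c) ^ 4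
        = (w x t * t i ^ 4) - (4 * c) * (w x t * t i ^ 3) + (6 * c ^ 2) * (w x t * t i ^ 2)
          - (4 * c ^ 3) * (w x t * t i) + c ^ 4 * w x t := by
      intro t _; ring
    rw [Finset.sum_congr rfl expand, Finset.sum_add_distrib, Finset.sum_sub_distrib,
      Finset.sum_add_distrib, Finset.sum_sub_distrib, ← Finset.mul_sum, ← Finset.mul_sum,
      ← Finset.mul_sum, ← Finset.mul_sum, hw1, mul_one]
  -- main identity
  have hmain : iteratedDeriv 4 (fun s => F (Function.update x i s)) (x i) =
      β ^ 3 * ((∑ t ∈ T, w x t * (t i - ∑ u ∈ T, w x u * u i) ^ 4) -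
        3 * ((∑ t ∈ T, w x t * (t i) ^ 2) - (∑ t ∈ T, w x t * t i) ^ 2) ^ 2) := by
    rw [hG]
    simp only [hlse]
    rw [h0, hPk 1, hPk 2, hPk 3, hPk 4, ← hc, hcent]
    have hp1 : (∑ t ∈ T, w x t * t i ^ 1) = c := by
      rw [hc]; exact Finset.sum_congr rfl fun t _ => by rw [pow_one]
    rw [hp1]
    have hq := hQpos.ne'
    field_simp
    ring
  refine ⟨hmain, ?_, ?_⟩
  · -- bound
    rw [hmain, abs_mul, abs_of_pos (by positivity : (0 : ℝ) < β ^ 3)]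
    have hb := bound_aux T (w x) (fun t => t i) hwn hw1
    calc β ^ 3 * |(∑ t ∈ T, w x t * (t i - ∑ u ∈ T, w x u * u i) ^ 4) -
          3 * ((∑ t ∈ T, w x t * (t i) ^ 2) - (∑ t ∈ T, w x t * t i) ^ 2) ^ 2|
        ≤ β ^ 3 * (26 * ∑ t ∈ T, w x t * t i ^ 4) :=
          mul_le_mul_of_nonneg_left hb (by positivity)
      _ = 26 * β ^ 3 * ∑ t ∈ T, w x t * t i ^ 4 := by ring
  · -- sup bound
    have hM : ∀ t ∈ T, t i ^ 4 ≤ T.sup' hT fun t => |t i| ^ 4 := by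
      intro t ht
      have h : t i ^ 4 = |t i| ^ 4 := by
        rw [← abs_pow, abs_of_nonneg (by positivity)]
      rw [h]
      exact Finset.le_sup' (fun t => |t i| ^ 4) ht
    have hle : (∑ t ∈ T, w x t * t i ^ 4) ≤ T.sup' hT fun t => |t i| ^ 4 := by
      calc (∑ t ∈ T, w x t * t i ^ 4)
          ≤ ∑ t ∈ T, w x t * (T.sup' hT fun t => |t i| ^ 4) :=
            Finset.sum_le_sum fun t ht => mul_le_mul_of_nonneg_left (hM t ht) (hwn t ht)
        _ = T.sup' hT fun t => |t i| ^ 4 := by rw [← Finset.sum_mul, hw1, one_mul]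
    exact mul_le_mul_of_nonneg_left hle (by positivity)
end

section
/- Let xi = (xi_1,...,xi_n) have independent coordinates with E xi_i = 0, E xi_i^2 = 1, E xi_i^3 = 0, E xi_i^4 < infinity. Then for any C^4-smooth f : R^n -> R with suitable integrability, E[L f(xi)] = sum_i E[xi_i^2 * integral_0^1 (1-s) * partial_i^4 f(xi^(i) + s*xi_i*e_i) ds] - sum_i E[(xi_i^4/2) * integral_0^1 (1-s)^2 * partial_i^4 f(xi^(i) + s*xi_i*e_i) ds], where xi^(i) = xi - xi_i e_i. -/
open Finset MeasureTheory ProbabilityTheory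

private theorem stein_line_iter {E : Type*} [NormedAddCommGroup E] [NormedSpace ℝ E]
    (f : E → ℝ) (hf : ContDiff ℝ 4 f) (c e : E) :
    ∀ (k : ℕ), k ≤ 4 → ∀ (t : ℝ),
      iteratedDeriv k (fun s : ℝ => f (c + s • e)) t
        = iteratedFDeriv ℝ k f (c + t • e) (fun _ => e) := by
  intro k
  induction k with
  | zero => intro _ t; simp [iteratedFDeriv_zero_apply]
  | succ k ih =>
    intro hk t
    have hk4 : k ≤ 4 := by omega
    have heq : iteratedDeriv k (fun s : ℝ => f (c + s • e))
        = fun u : ℝ => iteratedFDeriv ℝ k f (c + u • e) (fun _ => e) := by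
      funext u; exact ih hk4 u
    rw [iteratedDeriv_succ, heq]
    have hA : HasDerivAt (fun u : ℝ => c + u • e) e t := by
      simpa using ((hasDerivAt_id t).smul_const e).const_add c
    have hdiff : DifferentiableAt ℝ (iteratedFDeriv ℝ k f) (c + t • e) := by
      refine (hf.differentiable_iteratedFDeriv ?_ _)
      exact_mod_cast (by omega : k < 4)
    have hdf : HasFDerivAt (iteratedFDeriv ℝ k f)
        (fderiv ℝ (iteratedFDeriv ℝ k f) (c + t • e)) (c + t • e) := hdiff.hasFDerivAt
    have h2 := (hdf.continuousMultilinear_apply_const (fun _ => e)).comp_hasDerivAt t hA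
    have h3 : HasDerivAt (fun u : ℝ => iteratedFDeriv ℝ k f (c + u • e) (fun _ => e))
        (((fderiv ℝ (iteratedFDeriv ℝ k f) (c + t • e)).flipMultilinear fun _ => e) e) t := h2
    rw [h3.deriv, iteratedFDeriv_succ_apply_left]
    rfl

private theorem stein_hasDerivAt_iter (g : ℝ → ℝ) (hg : ContDiff ℝ 4 g) (k : ℕ) (hk : k < 4)
    (u : ℝ) : HasDerivAt (iteratedDeriv k g) (iteratedDeriv (k+1) g u) u := by
  have hd : DifferentiableAt ℝ (iteratedDeriv k g) u :=
    (hg.differentiable_iteratedDeriv k (by exact_mod_cast hk)).differentiableAt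
  rw [iteratedDeriv_succ]
  exact hd.hasDerivAt

private theorem stein_taylorA (g : ℝ → ℝ) (hg : ContDiff ℝ 4 g) (t : ℝ) :
    iteratedDeriv 2 g t = iteratedDeriv 2 g 0 + t * iteratedDeriv 3 g 0
      + t^2 * ∫ s in (0:ℝ)..1, (1-s) * iteratedDeriv 4 g (s*t) := by
  have hc4 : Continuous (iteratedDeriv 4 g) := hg.continuous_iteratedDeriv 4 le_rfl
  have key : ∀ u ∈ Set.uIcc (0:ℝ) t,
      HasDerivAt (fun u => iteratedDeriv 2 g u + (t - u) * iteratedDeriv 3 g u)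
        ((t - u) * iteratedDeriv 4 g u) u := by
    intro u _
    have h2 := stein_hasDerivAt_iter g hg 2 (by norm_num) u
    have h3 := stein_hasDerivAt_iter g hg 3 (by norm_num) u
    have H := h2.add ((((hasDerivAt_id u).const_sub t)).mul h3)
    have e : iteratedDeriv (2+1) g u + (-1 * iteratedDeriv 3 g u + (t - u) * iteratedDeriv (3+1) g u)
        = (t - u) * iteratedDeriv 4 g u := by
      norm_num
    exact e ▸ H
  have hint : IntervalIntegrable (fun u => (t - u) * iteratedDeriv 4 g u) volume 0 t :=
    ((continuous_const.sub continuous_id).mul hc4).intervalIntegrable _ _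
  have hInt := intervalIntegral.integral_eq_sub_of_hasDerivAt key hint
  simp only [sub_self, zero_mul, add_zero, sub_zero] at hInt
  have hsub : t^2 * (∫ s in (0:ℝ)..1, (1-s) * iteratedDeriv 4 g (s*t))
      = ∫ u in (0:ℝ)..t, (t - u) * iteratedDeriv 4 g u := by
    by_cases ht : t = 0
    · subst ht; simp
    · have e1 : ∀ s : ℝ, (1-s) * iteratedDeriv 4 g (s*t)
          = t⁻¹ * ((t - s*t) * iteratedDeriv 4 g (s*t)) := by
        intro s; field_simp
      rw [intervalIntegral.integral_congr (g := fun s => t⁻¹ * ((t - s*t) * iteratedDeriv 4 g (s*t))) (fun s _ => e1 s)]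
      rw [intervalIntegral.integral_const_mul]
      rw [intervalIntegral.integral_comp_mul_right (fun u => (t - u) * iteratedDeriv 4 g u) ht]
      simp only [zero_mul, one_mul, smul_eq_mul]
      field_simp
  rw [hsub, hInt]; ring

private theorem stein_taylorB (g : ℝ → ℝ) (hg : ContDiff ℝ 4 g) (t : ℝ) :
    iteratedDeriv 1 g t = iteratedDeriv 1 g 0 + t * iteratedDeriv 2 g 0
      + t^2/2 * iteratedDeriv 3 g 0
      + t^3/2 * ∫ s in (0:ℝ)..1, (1-s)^2 * iteratedDeriv 4 g (s*t) := by
  have hc4 : Continuous (iteratedDeriv 4 g) := hg.continuous_iteratedDeriv 4 le_rfl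
  have key : ∀ u ∈ Set.uIcc (0:ℝ) t,
      HasDerivAt (fun u => iteratedDeriv 1 g u + (t - u) * iteratedDeriv 2 g u
          + (t - u)^2/2 * iteratedDeriv 3 g u)
        ((t - u)^2/2 * iteratedDeriv 4 g u) u := by
    intro u _
    have h1 := stein_hasDerivAt_iter g hg 1 (by norm_num) u
    have h2 := stein_hasDerivAt_iter g hg 2 (by norm_num) u
    have h3 := stein_hasDerivAt_iter g hg 3 (by norm_num) u
    have hq : HasDerivAt (fun u => (t - u)^2/2) ((2 * (t-u)^1 * (-1))/2) u :=
      (((hasDerivAt_id u).const_sub t).pow 2).div_const 2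
    have H := (h1.add ((((hasDerivAt_id u).const_sub t)).mul h2)).add (hq.mul h3)
    have e : (iteratedDeriv (1+1) g u + (-1 * iteratedDeriv 2 g u + (t - u) * iteratedDeriv (2+1) g u))
        + ((2 * (t - u) ^ 1 * (-1) / 2) * iteratedDeriv 3 g u + ((t - u)^2/2) * iteratedDeriv (3+1) g u)
        = (t - u)^2/2 * iteratedDeriv 4 g u := by
      norm_num; ring
    exact e ▸ H
  have hint : IntervalIntegrable (fun u => (t - u)^2/2 * iteratedDeriv 4 g u) volume 0 t :=
    ((((continuous_const.sub continuous_id).pow 2).div_const 2).mul hc4).intervalIntegrable _ _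
  have hInt := intervalIntegral.integral_eq_sub_of_hasDerivAt key hint
  simp only [sub_self, zero_mul, add_zero, sub_zero, ne_eq, OfNat.ofNat_ne_zero,
    not_false_eq_true, zero_pow, zero_div] at hInt
  have hsub : t^3/2 * (∫ s in (0:ℝ)..1, (1-s)^2 * iteratedDeriv 4 g (s*t))
      = ∫ u in (0:ℝ)..t, (t - u)^2/2 * iteratedDeriv 4 g u := by
    by_cases ht : t = 0
    · subst ht; simp
    · have e1 : ∀ s : ℝ, (1-s)^2 * iteratedDeriv 4 g (s*t)
          = (2/t^2) * ((t - s*t)^2/2 * iteratedDeriv 4 g (s*t)) := by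
        intro s; field_simp
      rw [intervalIntegral.integral_congr (g := fun s => (2/t^2) * ((t - s*t)^2/2 * iteratedDeriv 4 g (s*t))) (fun s _ => e1 s)]
      rw [intervalIntegral.integral_const_mul]
      rw [intervalIntegral.integral_comp_mul_right (fun u => (t - u)^2/2 * iteratedDeriv 4 g u) ht]
      simp only [zero_mul, one_mul, smul_eq_mul]
      field_simp
  rw [hsub, hInt]; ring

private theorem stein_indep_aux (n : ℕ) {Ω : Type*} [MeasurableSpace Ω] (μ : Measure Ω)
    (ξ : Ω → Fin n → ℝ) (hmeas : ∀ i, Measurable fun ω => ξ ω i)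
    (hindep : iIndepFun (fun i ω => ξ ω i) μ)
    (i : Fin n) (m : ℕ) (q : (Fin n → ℝ) → ℝ) (hq : Continuous q) :
    IndepFun (fun ω => (ξ ω i)^m) (fun ω => q (Function.update (ξ ω) i 0)) μ := by
  have h := hindep.indepFun_finset {i} {i}ᶜ disjoint_compl_right hmeas
  have hφ : Measurable fun v : ({i} : Finset (Fin n)) → ℝ =>
      (v ⟨i, Finset.mem_singleton_self i⟩)^m :=
    (measurable_pi_apply _).pow_const m
  have hψ : Measurable fun v : (({i}ᶜ : Finset (Fin n)) : Type _) → ℝ =>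
      q (fun j => if h : j ∈ ({i}ᶜ : Finset (Fin n)) then v ⟨j, h⟩ else 0) := by
    apply hq.measurable.comp
    apply measurable_pi_lambda
    intro j
    by_cases h : j ∈ ({i}ᶜ : Finset (Fin n))
    · simpa [h] using measurable_pi_apply (⟨j, h⟩ : (({i}ᶜ : Finset (Fin n)) : Type _))
    · simpa [h] using measurable_const
  have h2 := h.comp hφ hψ
  have e1 : ((fun v : ({i} : Finset (Fin n)) → ℝ => (v ⟨i, Finset.mem_singleton_self i⟩)^m)
      ∘ (fun a (j : ({i} : Finset (Fin n))) => ξ a j)) = fun ω => (ξ ω i)^m := rfl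
  have e2 : ((fun v : (({i}ᶜ : Finset (Fin n)) : Type _) → ℝ =>
        q (fun j => if h : j ∈ ({i}ᶜ : Finset (Fin n)) then v ⟨j, h⟩ else 0))
      ∘ (fun a (j : (({i}ᶜ : Finset (Fin n)) : Type _)) => ξ a j))
      = fun ω => q (Function.update (ξ ω) i 0) := by
    funext ω
    simp only [Function.comp_apply]
    congr 1
    funext j
    by_cases h : j = i
    · subst h; simp
    · simp [Function.update_apply, h, Finset.mem_compl, Finset.mem_singleton]
  rw [e1, e2] at h2
  exact h2

private theorem stein_meas_aux (n : ℕ) {Ω : Type*} [MeasurableSpace Ω]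
    (ξ : Ω → Fin n → ℝ) (hmeas : ∀ i, Measurable fun ω => ξ ω i)
    (i : Fin n) (q : (Fin n → ℝ) → ℝ) (hq : Continuous q) (c : ℝ → ℝ) (hc : Continuous c) :
    Measurable fun ω => ∫ s in (0:ℝ)..1, c s * q (Function.update (ξ ω) i (s * ξ ω i)) := by
  have hupd : Measurable fun p : Ω × ℝ => Function.update (ξ p.1) i (p.2 * ξ p.1 i) := by
    apply measurable_pi_lambda
    intro j
    simp only [Function.update_apply]
    by_cases h : j = i
    · simp only [h, if_true]
      exact (measurable_snd.mul ((hmeas i).comp measurable_fst))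
    · simp only [h, if_false]
      exact (hmeas j).comp measurable_fst
  have hjoint : StronglyMeasurable
      (fun p : Ω × ℝ => c p.2 * q (Function.update (ξ p.1) i (p.2 * ξ p.1 i))) :=
    ((hc.measurable.comp measurable_snd).mul (hq.measurable.comp hupd)).stronglyMeasurable
  simp only [intervalIntegral.integral_of_le (zero_le_one (α := ℝ))]
  exact (hjoint.integral_prod_right' (ν := volume.restrict (Set.Ioc 0 1))).measurable

/-- Fourth-order Stein-type formula for the Ornstein–Uhlenbeck generator
`L f(x) = Δf(x) - ⟨x, ∇f(x)⟩`: if `ξ` has independent coordinates with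
`Eξᵢ = Eξᵢ³ = 0`, `Eξᵢ² = 1`, `Eξᵢ⁴ < ∞`, then for `C⁴`-smooth `f` with bounded
derivatives up to order 4,
`E[Lf(ξ)] = ∑ᵢ E[ξᵢ² ∫₀¹ (1-s) ∂ᵢ⁴f(ξ⁽ⁱ⁾ + sξᵢeᵢ) ds]
  - ∑ᵢ E[(ξᵢ⁴/2) ∫₀¹ (1-s)² ∂ᵢ⁴f(ξ⁽ⁱ⁾ + sξᵢeᵢ) ds]`. -/
theorem stein_formula_fourth_order (n : ℕ)
    {Ω : Type*} [MeasurableSpace Ω] (μ : Measure Ω) [IsProbabilityMeasure μ]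
    (ξ : Ω → Fin n → ℝ) (hmeas : ∀ i, Measurable fun ω => ξ ω i)
    (hindep : iIndepFun (fun i ω => ξ ω i) μ)
    (hm1 : ∀ i, ∫ ω, ξ ω i ∂μ = 0)
    (hm2 : ∀ i, ∫ ω, (ξ ω i) ^ 2 ∂μ = 1)
    (hm3 : ∀ i, ∫ ω, (ξ ω i) ^ 3 ∂μ = 0)
    (hm4 : ∀ i, Integrable (fun ω => (ξ ω i) ^ 4) μ)
    (f : (Fin n → ℝ) → ℝ) (hf : ContDiff ℝ 4 f)
    (pd : ℕ → Fin n → (Fin n → ℝ) → ℝ)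
    (hpd : pd = fun k i x => iteratedDeriv k (fun s => f (Function.update x i s)) (x i))
    (B : ℝ) (hbdd : ∀ x, |f x| ≤ B) (hbddpd : ∀ k ≤ 4, ∀ i x, |pd k i x| ≤ B)
    (L : (Fin n → ℝ) → ℝ)
    (hL : L = fun x => (∑ i, pd 2 i x) - ∑ i, x i * pd 1 i x) :
    ∫ ω, L (ξ ω) ∂μ =
      (∑ i, ∫ ω, (ξ ω i) ^ 2 *
        ∫ s in (0:ℝ)..1, (1 - s) * pd 4 i (Function.update (ξ ω) i (s * ξ ω i)) ∂volume ∂μ) -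
      ∑ i, ∫ ω, ((ξ ω i) ^ 4 / 2) *
        ∫ s in (0:ℝ)..1, (1 - s) ^ 2 * pd 4 i (Function.update (ξ ω) i (s * ξ ω i)) ∂volume ∂μ := by
  have hB : 0 ≤ B := le_trans (abs_nonneg _) (hbdd 0)
  have hmΞ : Measurable ξ := measurable_pi_lambda _ hmeas
  -- decomposition of update as affine line
  have hupdEq : ∀ (x : Fin n → ℝ) (i : Fin n) (t : ℝ),
      Function.update x i t = Function.update x i 0 + t • (Pi.single i 1 : Fin n → ℝ) := by
    intro x i t
    funext j
    by_cases h : j = i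
    · subst h; simp
    · simp [Function.update_apply, h, Pi.single_apply]
  -- pd as iterated Fréchet derivative
  have hpdRep : ∀ (k : ℕ), k ≤ 4 → ∀ (i : Fin n) (x : Fin n → ℝ),
      pd k i x = iteratedFDeriv ℝ k f x (fun _ => (Pi.single i 1 : Fin n → ℝ)) := by
    intro k hk i x
    simp only [hpd]
    have e1 : (fun s : ℝ => f (Function.update x i s))
        = fun s : ℝ => f (Function.update x i 0 + s • (Pi.single i 1 : Fin n → ℝ)) := by
      funext s; rw [hupdEq]
    rw [e1, stein_line_iter f hf (Function.update x i 0) (Pi.single i 1) k hk (x i),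
      ← hupdEq, Function.update_eq_self]
  have hpdCont : ∀ (k : ℕ), k ≤ 4 → ∀ i, Continuous (pd k i) := by
    intro k hk i
    have e : pd k i = fun x => iteratedFDeriv ℝ k f x (fun _ => (Pi.single i 1 : Fin n → ℝ)) :=
      funext (hpdRep k hk i)
    rw [e]
    exact (ContinuousMultilinearMap.apply ℝ (fun _ : Fin k => (Fin n → ℝ)) ℝ
        (fun _ => (Pi.single i 1 : Fin n → ℝ))).continuous.comp
      (hf.continuous_iteratedFDeriv (by exact_mod_cast hk))
  -- smoothness of the section
  have hupdC : ∀ (x : Fin n → ℝ) (i : Fin n),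
      ContDiff ℝ 4 (fun s : ℝ => Function.update x i s) := by
    intro x i
    apply contDiff_pi.2
    intro j
    by_cases h : j = i
    · subst h
      simp only [Function.update_self]
      exact contDiff_id
    · simp only [Function.update_apply, h, if_false]
      exact contDiff_const
  -- pointwise Taylor identity
  have hTaylor : ∀ (i : Fin n) (x : Fin n → ℝ),
      pd 2 i x - x i * pd 1 i x
        = (pd 2 i (Function.update x i 0)
            + (x i)^1 * pd 3 i (Function.update x i 0)
            + (x i)^2 * (∫ s in (0:ℝ)..1, (1-s) * pd 4 i (Function.update x i (s * x i))))
          - ((x i)^1 * pd 1 i (Function.update x i 0)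
            + (x i)^2 * pd 2 i (Function.update x i 0)
            + (x i)^3 * (pd 3 i (Function.update x i 0) / 2)
            + (x i)^4 * ((∫ s in (0:ℝ)..1, (1-s)^2 * pd 4 i (Function.update x i (s * x i))) / 2)) := by
    intro i x
    have hgC : ContDiff ℝ 4 (fun s : ℝ => f (Function.update x i s)) :=
      hf.comp (hupdC x i)
    have hgk : ∀ (k : ℕ) (t : ℝ),
        iteratedDeriv k (fun s : ℝ => f (Function.update x i s)) t
          = pd k i (Function.update x i t) := by
      intro k t
      simp only [hpd, Function.update_idem, Function.update_self]
    have HA := stein_taylorA _ hgC (x i)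
    have HB := stein_taylorB _ hgC (x i)
    simp only [hgk, Function.update_eq_self] at HA HB
    rw [HA, HB]
    ring
  -- integrability of powers
  have hPow : ∀ (i : Fin n) (m : ℕ), m ≤ 4 → Integrable (fun ω => (ξ ω i)^m) μ := by
    intro i m hm
    have hZ : Integrable (fun ω => 1 + (ξ ω i)^4) μ := (integrable_const 1).add (hm4 i)
    refine hZ.mono' (((hmeas i).pow_const m).aestronglyMeasurable)
      (Filter.Eventually.of_forall fun ω => ?_)
    rw [Real.norm_eq_abs, abs_pow]
    rcases le_total |ξ ω i| 1 with h | h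
    · calc |ξ ω i|^m ≤ 1 := pow_le_one₀ (abs_nonneg _) h
        _ ≤ 1 + (ξ ω i)^4 := le_add_of_nonneg_right (by positivity)
    · calc |ξ ω i|^m ≤ |ξ ω i|^4 := pow_le_pow_right₀ h hm
        _ = (ξ ω i)^4 := by
            rw [pow_abs, abs_of_nonneg (by positivity)]
        _ ≤ 1 + (ξ ω i)^4 := le_add_of_nonneg_left zero_le_one
  -- integrability of bounded measurable functions
  have hBddInt : ∀ (Z : Ω → ℝ), Measurable Z → (∀ ω, |Z ω| ≤ B) → Integrable Z μ := by
    intro Z hZm hZb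
    exact (integrable_const B).mono' hZm.aestronglyMeasurable
      (Filter.Eventually.of_forall fun ω => by rw [Real.norm_eq_abs]; exact hZb ω)
  -- integrability of power times bounded
  have hprod : ∀ (i : Fin n) (m : ℕ), m ≤ 4 → ∀ (Z : Ω → ℝ), Measurable Z →
      (∀ ω, |Z ω| ≤ B) → Integrable (fun ω => (ξ ω i)^m * Z ω) μ := by
    intro i m hm Z hZm hZb
    have hg : Integrable (fun ω => B * |(ξ ω i)^m|) μ := ((hPow i m hm).abs.const_mul B)
    refine hg.mono' (((hmeas i).pow_const m).mul hZm).aestronglyMeasurable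
      (Filter.Eventually.of_forall fun ω => ?_)
    rw [Real.norm_eq_abs, abs_mul, mul_comm B]
    exact mul_le_mul_of_nonneg_left (hZb ω) (abs_nonneg _)
  -- per-coordinate identity
  have key : ∀ i : Fin n,
      ∫ ω, (pd 2 i (ξ ω) - ξ ω i * pd 1 i (ξ ω)) ∂μ
        = (∫ ω, (ξ ω i)^2 *
            ∫ s in (0:ℝ)..1, (1 - s) * pd 4 i (Function.update (ξ ω) i (s * ξ ω i)) ∂volume ∂μ)
          - ∫ ω, ((ξ ω i)^4/2) *
            ∫ s in (0:ℝ)..1, (1 - s)^2 * pd 4 i (Function.update (ξ ω) i (s * ξ ω i)) ∂volume ∂μ := by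
    intro i
    have hmU : Measurable fun ω => Function.update (ξ ω) i 0 := by
      apply measurable_pi_lambda
      intro j
      simp only [Function.update_apply]
      by_cases h : j = i
      · simp only [h, if_true]; exact measurable_const
      · simp only [h, if_false]; exact hmeas j
    have hmY : ∀ (k : ℕ), k ≤ 4 → Measurable fun ω => pd k i (Function.update (ξ ω) i 0) :=
      fun k hk => ((hpdCont k hk i).measurable).comp hmU
    have hiY : ∀ (k : ℕ), k ≤ 4 →
        Integrable (fun ω => pd k i (Function.update (ξ ω) i 0)) μ :=
      fun k hk => hBddInt _ (hmY k hk) (fun ω => hbddpd k hk i _)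
    -- remainders
    have hmR1 : Measurable fun ω =>
        ∫ s in (0:ℝ)..1, (1 - s) * pd 4 i (Function.update (ξ ω) i (s * ξ ω i)) :=
      stein_meas_aux n ξ hmeas i (pd 4 i) (hpdCont 4 le_rfl i) (fun s => 1 - s)
        (continuous_const.sub continuous_id)
    have hmR2 : Measurable fun ω =>
        ∫ s in (0:ℝ)..1, (1 - s)^2 * pd 4 i (Function.update (ξ ω) i (s * ξ ω i)) :=
      stein_meas_aux n ξ hmeas i (pd 4 i) (hpdCont 4 le_rfl i) (fun s => (1 - s)^2)
        ((continuous_const.sub continuous_id).pow 2)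
    have hR1bd : ∀ ω,
        |∫ s in (0:ℝ)..1, (1 - s) * pd 4 i (Function.update (ξ ω) i (s * ξ ω i))| ≤ B := by
      intro ω
      have := intervalIntegral.norm_integral_le_of_norm_le_const (C := B)
        (f := fun s => (1 - s) * pd 4 i (Function.update (ξ ω) i (s * ξ ω i)))
        (a := (0:ℝ)) (b := 1) ?_
      · simpa using this
      · intro s hs
        rw [Set.uIoc_of_le (zero_le_one (α := ℝ))] at hs
        rw [Real.norm_eq_abs, abs_mul]
        have h1 : |1 - s| ≤ 1 := by
          rw [abs_le]; constructor <;> [linarith [hs.2]; linarith [hs.1]]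
        calc |1 - s| * |pd 4 i _| ≤ 1 * B :=
              mul_le_mul h1 (hbddpd 4 le_rfl i _) (abs_nonneg _) zero_le_one
          _ = B := one_mul B
    have hR2bd : ∀ ω,
        |∫ s in (0:ℝ)..1, (1 - s)^2 * pd 4 i (Function.update (ξ ω) i (s * ξ ω i))| ≤ B := by
      intro ω
      have := intervalIntegral.norm_integral_le_of_norm_le_const (C := B)
        (f := fun s => (1 - s)^2 * pd 4 i (Function.update (ξ ω) i (s * ξ ω i)))
        (a := (0:ℝ)) (b := 1) ?_
      · simpa using this
      · intro s hs
        rw [Set.uIoc_of_le (zero_le_one (α := ℝ))] at hs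
        rw [Real.norm_eq_abs, abs_mul]
        have h1 : |(1 - s)^2| ≤ 1 := by
          rw [abs_pow]
          refine pow_le_one₀ (abs_nonneg _) ?_
          rw [abs_le]; constructor <;> [linarith [hs.2]; linarith [hs.1]]
        calc |(1 - s)^2| * |pd 4 i _| ≤ 1 * B :=
              mul_le_mul h1 (hbddpd 4 le_rfl i _) (abs_nonneg _) zero_le_one
          _ = B := one_mul B
    -- independence: factorization of mixed moments
    have hind : ∀ (m : ℕ), m ≤ 4 → ∀ (k : ℕ), k ≤ 4 →
        ∫ ω, (ξ ω i)^m * pd k i (Function.update (ξ ω) i 0) ∂μ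
          = (∫ ω, (ξ ω i)^m ∂μ) * ∫ ω, pd k i (Function.update (ξ ω) i 0) ∂μ := by
      intro m hm k hk
      exact (stein_indep_aux n μ ξ hmeas hindep i m (pd k i)
        (hpdCont k hk i)).integral_fun_mul_eq_mul_integral (hPow i m hm).aestronglyMeasurable (hiY k hk).aestronglyMeasurable
    -- integrability of the seven pieces
    have hi1 : Integrable (fun ω => pd 2 i (Function.update (ξ ω) i 0)) μ :=
      hiY 2 (by norm_num)
    have hi2 : Integrable (fun ω => (ξ ω i)^1 * pd 3 i (Function.update (ξ ω) i 0)) μ :=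
      hprod i 1 (by norm_num) _ (hmY 3 (by norm_num)) (fun ω => hbddpd 3 (by norm_num) i _)
    have hi3 : Integrable (fun ω => (ξ ω i)^2 *
        ∫ s in (0:ℝ)..1, (1 - s) * pd 4 i (Function.update (ξ ω) i (s * ξ ω i))) μ :=
      hprod i 2 (by norm_num) _ hmR1 hR1bd
    have hi4 : Integrable (fun ω => (ξ ω i)^1 * pd 1 i (Function.update (ξ ω) i 0)) μ :=
      hprod i 1 (by norm_num) _ (hmY 1 (by norm_num)) (fun ω => hbddpd 1 (by norm_num) i _)
    have hi5 : Integrable (fun ω => (ξ ω i)^2 * pd 2 i (Function.update (ξ ω) i 0)) μ :=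
      hprod i 2 (by norm_num) _ (hmY 2 (by norm_num)) (fun ω => hbddpd 2 (by norm_num) i _)
    have hi6 : Integrable (fun ω => (ξ ω i)^3 * (pd 3 i (Function.update (ξ ω) i 0) / 2)) μ := by
      refine hprod i 3 (by norm_num) _ ((hmY 3 (by norm_num)).div_const 2) (fun ω => ?_)
      rw [abs_div]
      calc |pd 3 i _| / |(2:ℝ)| ≤ B / |(2:ℝ)| := by
            apply div_le_div_of_nonneg_right (hbddpd 3 (by norm_num) i _) ?_ <;> simp [abs_of_pos]
        _ ≤ B := by rw [abs_of_pos (by norm_num : (0:ℝ) < 2)]; linarith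
    have hi7 : Integrable (fun ω => (ξ ω i)^4 *
        ((∫ s in (0:ℝ)..1, (1 - s)^2 * pd 4 i (Function.update (ξ ω) i (s * ξ ω i))) / 2)) μ := by
      refine hprod i 4 le_rfl _ (hmR2.div_const 2) (fun ω => ?_)
      rw [abs_div]
      calc |_| / |(2:ℝ)| ≤ B / |(2:ℝ)| := by
            apply div_le_div_of_nonneg_right (hR2bd ω) ?_ <;> simp [abs_of_pos]
        _ ≤ B := by rw [abs_of_pos (by norm_num : (0:ℝ) < 2)]; linarith
    -- rewrite using Taylor and split
    have hi12 : Integrable (fun ω => pd 2 i (Function.update (ξ ω) i 0)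
        + (ξ ω i)^1 * pd 3 i (Function.update (ξ ω) i 0)) μ := by exact hi1.add hi2
    have hiS1 : Integrable (fun ω => pd 2 i (Function.update (ξ ω) i 0)
        + (ξ ω i)^1 * pd 3 i (Function.update (ξ ω) i 0)
        + (ξ ω i)^2 * ∫ s in (0:ℝ)..1, (1 - s) * pd 4 i (Function.update (ξ ω) i (s * ξ ω i))) μ := by
      exact hi12.add hi3
    have hi45 : Integrable (fun ω => (ξ ω i)^1 * pd 1 i (Function.update (ξ ω) i 0)
        + (ξ ω i)^2 * pd 2 i (Function.update (ξ ω) i 0)) μ := by exact hi4.add hi5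
    have hi456 : Integrable (fun ω => (ξ ω i)^1 * pd 1 i (Function.update (ξ ω) i 0)
        + (ξ ω i)^2 * pd 2 i (Function.update (ξ ω) i 0)
        + (ξ ω i)^3 * (pd 3 i (Function.update (ξ ω) i 0) / 2)) μ := by exact hi45.add hi6
    have hiS2 : Integrable (fun ω => (ξ ω i)^1 * pd 1 i (Function.update (ξ ω) i 0)
        + (ξ ω i)^2 * pd 2 i (Function.update (ξ ω) i 0)
        + (ξ ω i)^3 * (pd 3 i (Function.update (ξ ω) i 0) / 2)
        + (ξ ω i)^4 * ((∫ s in (0:ℝ)..1, (1 - s)^2 * pd 4 i (Function.update (ξ ω) i (s * ξ ω i))) / 2)) μ := by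
      exact hi456.add hi7
    rw [integral_congr_ae (Filter.Eventually.of_forall fun ω => hTaylor i (ξ ω))]
    rw [integral_sub hiS1 hiS2]
    rw [integral_add hi12 hi3, integral_add hi1 hi2]
    rw [integral_add hi456 hi7, integral_add hi45 hi6, integral_add hi4 hi5]
    have hm1' : ∫ ω, (ξ ω i)^1 ∂μ = 0 := by simpa using hm1 i
    have hz2 : ∫ ω, (ξ ω i)^1 * pd 3 i (Function.update (ξ ω) i 0) ∂μ = 0 := by
      rw [hind 1 (by norm_num) 3 (by norm_num), hm1', zero_mul]
    have hz4 : ∫ ω, (ξ ω i)^1 * pd 1 i (Function.update (ξ ω) i 0) ∂μ = 0 := by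
      rw [hind 1 (by norm_num) 1 (by norm_num), hm1', zero_mul]
    have hz5 : ∫ ω, (ξ ω i)^2 * pd 2 i (Function.update (ξ ω) i 0) ∂μ
        = ∫ ω, pd 2 i (Function.update (ξ ω) i 0) ∂μ := by
      rw [hind 2 (by norm_num) 2 (by norm_num), hm2 i, one_mul]
    have hz6 : ∫ ω, (ξ ω i)^3 * (pd 3 i (Function.update (ξ ω) i 0) / 2) ∂μ = 0 := by
      have e6 : (fun ω => (ξ ω i)^3 * (pd 3 i (Function.update (ξ ω) i 0) / 2))
          = fun ω => (1/2) * ((ξ ω i)^3 * pd 3 i (Function.update (ξ ω) i 0)) := by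
        funext ω; ring
      rw [e6, integral_const_mul, hind 3 (by norm_num) 3 (by norm_num), hm3 i, zero_mul, mul_zero]
    have hz7 : ∫ ω, (ξ ω i)^4 *
          ((∫ s in (0:ℝ)..1, (1 - s)^2 * pd 4 i (Function.update (ξ ω) i (s * ξ ω i))) / 2) ∂μ
        = ∫ ω, ((ξ ω i)^4/2) *
          ∫ s in (0:ℝ)..1, (1 - s)^2 * pd 4 i (Function.update (ξ ω) i (s * ξ ω i)) ∂volume ∂μ := by
      refine integral_congr_ae (Filter.Eventually.of_forall fun ω => ?_)
      ring
    rw [hz2, hz4, hz5, hz6, hz7]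
    ring
  -- final assembly
  have hint_i : ∀ i : Fin n, Integrable (fun ω => pd 2 i (ξ ω) - ξ ω i * pd 1 i (ξ ω)) μ := by
    intro i
    refine Integrable.sub
      (hBddInt _ ((hpdCont 2 (by norm_num) i).measurable.comp hmΞ)
        (fun ω => hbddpd 2 (by norm_num) i _)) ?_
    have := hprod i 1 (by norm_num) (fun ω => pd 1 i (ξ ω))
      ((hpdCont 1 (by norm_num) i).measurable.comp hmΞ)
      (fun ω => hbddpd 1 (by norm_num) i _)
    simpa [pow_one] using this
  simp only [hL]
  calc ∫ ω, ((∑ i, pd 2 i (ξ ω)) - ∑ i, ξ ω i * pd 1 i (ξ ω)) ∂μ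
      = ∫ ω, ∑ i, (pd 2 i (ξ ω) - ξ ω i * pd 1 i (ξ ω)) ∂μ := by
        refine integral_congr_ae (Filter.Eventually.of_forall fun ω => ?_)
        simp only [Finset.sum_sub_distrib]
    _ = ∑ i, ∫ ω, (pd 2 i (ξ ω) - ξ ω i * pd 1 i (ξ ω)) ∂μ :=
        integral_finset_sum _ (fun i _ => hint_i i)
    _ = ∑ i, ((∫ ω, (ξ ω i)^2 *
            ∫ s in (0:ℝ)..1, (1 - s) * pd 4 i (Function.update (ξ ω) i (s * ξ ω i)) ∂volume ∂μ)
          - ∫ ω, ((ξ ω i)^4/2) *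
            ∫ s in (0:ℝ)..1, (1 - s)^2 * pd 4 i (Function.update (ξ ω) i (s * ξ ω i)) ∂volume ∂μ) :=
        Finset.sum_congr rfl (fun i _ => key i)
    _ = _ := Finset.sum_sub_distrib _ _
end

section
/- Let xi have independent coordinates with E xi_i = 0, E xi_i^2 = 1, and E|xi_i|^3 < infinity. Then for any C^3-smooth f : R^n -> R with suitable integrability, E[L f(xi)] = sum_i E[xi_i * integral_0^1 partial_i^3 f(xi^(i) + s*xi_i*e_i) ds] - sum_i E[xi_i^3 * integral_0^1 (1-s) * partial_i^3 f(xi^(i) + s*xi_i*e_i) ds], where xi^(i) = xi - xi_i e_i. -/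
open Finset MeasureTheory ProbabilityTheory

section Aux

lemma taylor2OU {g : ℝ → ℝ} (hg : ContDiff ℝ 3 g) (t : ℝ) :
    iteratedDeriv 2 g t = iteratedDeriv 2 g 0
      + t * ∫ s in (0:ℝ)..1, iteratedDeriv 3 g (s * t) := by
  have hc3 : Continuous (iteratedDeriv 3 g) := hg.continuous_iteratedDeriv 3 le_rfl
  have hd2 : Differentiable ℝ (iteratedDeriv 2 g) :=
    hg.differentiable_iteratedDeriv 2 (by norm_num)
  have e3 : iteratedDeriv 3 g = deriv (iteratedDeriv 2 g) := iteratedDeriv_succ (n := 2)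
  have hftc : ∫ u in (0:ℝ)..t, iteratedDeriv 3 g u
      = iteratedDeriv 2 g t - iteratedDeriv 2 g 0 := by
    apply intervalIntegral.integral_eq_sub_of_hasDerivAt
    · intro u _
      rw [e3]
      exact (hd2 u).hasDerivAt
    · exact hc3.intervalIntegrable _ _
  rcases eq_or_ne t 0 with rfl | ht
  · simp
  · have hsub : (∫ s in (0:ℝ)..1, iteratedDeriv 3 g (s * t))
        = t⁻¹ • ∫ u in (0:ℝ)..t, iteratedDeriv 3 g u := by
      rw [intervalIntegral.integral_comp_mul_right _ ht]
      norm_num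
    rw [hsub, hftc]
    rw [smul_eq_mul, ← mul_assoc, mul_inv_cancel₀ ht, one_mul]; ring

lemma taylor1OU {g : ℝ → ℝ} (hg : ContDiff ℝ 3 g) (t : ℝ) :
    iteratedDeriv 1 g t = iteratedDeriv 1 g 0 + t * iteratedDeriv 2 g 0
      + t ^ 2 * ∫ s in (0:ℝ)..1, (1 - s) * iteratedDeriv 3 g (s * t) := by
  have hc3 : Continuous (iteratedDeriv 3 g) := hg.continuous_iteratedDeriv 3 le_rfl
  have hd1 : Differentiable ℝ (iteratedDeriv 1 g) :=
    hg.differentiable_iteratedDeriv 1 (by norm_num)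
  have hd2 : Differentiable ℝ (iteratedDeriv 2 g) :=
    hg.differentiable_iteratedDeriv 2 (by norm_num)
  have e2 : iteratedDeriv 2 g = deriv (iteratedDeriv 1 g) := iteratedDeriv_succ (n := 1)
  have e3 : iteratedDeriv 3 g = deriv (iteratedDeriv 2 g) := iteratedDeriv_succ (n := 2)
  set φ : ℝ → ℝ := fun u => iteratedDeriv 1 g u + (t - u) * iteratedDeriv 2 g u with hφ
  have hder : ∀ u : ℝ, HasDerivAt φ ((t - u) * iteratedDeriv 3 g u) u := by
    intro u
    have h1 : HasDerivAt (iteratedDeriv 1 g) (iteratedDeriv 2 g u) u := by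
      rw [e2]; exact (hd1 u).hasDerivAt
    have h2 : HasDerivAt (iteratedDeriv 2 g) (iteratedDeriv 3 g u) u := by
      rw [e3]; exact (hd2 u).hasDerivAt
    have h3 : HasDerivAt (fun u : ℝ => t - u) (-1) u := by
      simpa using (hasDerivAt_id u).const_sub t
    have : HasDerivAt (fun u => iteratedDeriv 1 g u + (t - u) * iteratedDeriv 2 g u)
        (iteratedDeriv 2 g u + (-1 * iteratedDeriv 2 g u + (t - u) * iteratedDeriv 3 g u)) u :=
      h1.add ((h3.mul h2))
    convert this using 1
    ring
  have hftc : ∫ u in (0:ℝ)..t, (t - u) * iteratedDeriv 3 g u = φ t - φ 0 := by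
    apply intervalIntegral.integral_eq_sub_of_hasDerivAt (fun u _ => hder u)
    exact ((continuous_const.sub continuous_id).mul hc3).intervalIntegrable _ _
  have hφt : φ t = iteratedDeriv 1 g t := by simp [hφ]
  have hφ0 : φ 0 = iteratedDeriv 1 g 0 + t * iteratedDeriv 2 g 0 := by simp [hφ]
  rcases eq_or_ne t 0 with rfl | ht
  · simp
  · have hsub : (∫ s in (0:ℝ)..1, (t - s * t) * iteratedDeriv 3 g (s * t))
        = t⁻¹ • ∫ u in (0:ℝ)..t, (t - u) * iteratedDeriv 3 g u := by
      rw [intervalIntegral.integral_comp_mul_right (fun u => (t - u) * iteratedDeriv 3 g u) ht]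
      norm_num
    have key : ∫ s in (0:ℝ)..1, (1 - s) * iteratedDeriv 3 g (s * t)
        = t⁻¹ * ∫ s in (0:ℝ)..1, (t - s * t) * iteratedDeriv 3 g (s * t) := by
      rw [← intervalIntegral.integral_const_mul]
      congr 1; funext s
      field_simp
    rw [key, hsub]
    rw [smul_eq_mul, hftc, hφt, hφ0]
    field_simp
    ring

lemma line_iteratedDerivOU {n : ℕ} {f : (Fin n → ℝ) → ℝ} {N : WithTop ℕ∞}
    (hf : ContDiff ℝ N f) (i : Fin n) :
    ∀ (k : ℕ), (k : WithTop ℕ∞) ≤ N → ∀ (x : Fin n → ℝ) (t : ℝ),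
    iteratedDeriv k (fun s => f (Function.update x i s)) t
      = iteratedFDeriv ℝ k f (Function.update x i t) (fun _ => Pi.single i 1) := by
  intro k
  induction k with
  | zero => intro _ x t; simp [iteratedFDeriv_zero_apply]
  | succ k IH =>
    intro hk x t
    have hk' : (k : WithTop ℕ∞) < N := lt_of_lt_of_le (by exact_mod_cast Nat.lt_succ_self k) hk
    have hdiff : Differentiable ℝ (iteratedFDeriv ℝ k f) :=
      hf.differentiable_iteratedFDeriv hk'
    have heq : iteratedDeriv k (fun s => f (Function.update x i s))
        = fun u => (ContinuousMultilinearMap.apply ℝ (fun _ : Fin k => (Fin n → ℝ)) ℝ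
            (fun _ => Pi.single i 1)) (iteratedFDeriv ℝ k f (Function.update x i u)) :=
      funext fun u => IH (le_of_lt hk') x u
    rw [iteratedDeriv_succ, heq]
    have h2 : HasFDerivAt (iteratedFDeriv ℝ k f)
        (fderiv ℝ (iteratedFDeriv ℝ k f) (Function.update x i t)) (Function.update x i t) :=
      (hdiff _).hasFDerivAt
    have h3 := (((ContinuousMultilinearMap.apply ℝ (fun _ : Fin k => (Fin n → ℝ)) ℝ
        (fun _ => Pi.single i 1)).hasFDerivAt.comp _ h2).comp_hasDerivAt t
        (hasDerivAt_update x i t))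
    have h4 : deriv (fun u => (ContinuousMultilinearMap.apply ℝ (fun _ : Fin k => (Fin n → ℝ)) ℝ
        (fun _ => Pi.single i 1)) (iteratedFDeriv ℝ k f (Function.update x i u))) t
        = ((ContinuousMultilinearMap.apply ℝ (fun _ : Fin k => (Fin n → ℝ)) ℝ
            (fun _ => Pi.single i 1)).comp
          (fderiv ℝ (iteratedFDeriv ℝ k f) (Function.update x i t))) (Pi.single i 1) :=
      HasDerivAt.deriv (by exact h3)
    rw [h4, iteratedFDeriv_succ_apply_left]
    rfl

end Aux

/-- Third-order Stein-type formula for the Ornstein–Uhlenbeck generator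
`L f(x) = Δf(x) - ⟨x, ∇f(x)⟩`: if `ξ` has independent coordinates with
`Eξᵢ = 0`, `Eξᵢ² = 1`, `E|ξᵢ|³ < ∞`, then for `C³`-smooth `f` with bounded
derivatives up to order 3,
`E[Lf(ξ)] = ∑ᵢ E[ξᵢ ∫₀¹ ∂ᵢ³f(ξ⁽ⁱ⁾ + sξᵢeᵢ) ds]
  - ∑ᵢ E[ξᵢ³ ∫₀¹ (1-s) ∂ᵢ³f(ξ⁽ⁱ⁾ + sξᵢeᵢ) ds]`. -/
theorem stein_formula_third_order (n : ℕ)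
    {Ω : Type*} [MeasurableSpace Ω] (μ : Measure Ω) [IsProbabilityMeasure μ]
    (ξ : Ω → Fin n → ℝ) (hmeas : ∀ i, Measurable fun ω => ξ ω i)
    (hindep : iIndepFun (fun i ω => ξ ω i) μ)
    (hm1 : ∀ i, ∫ ω, ξ ω i ∂μ = 0)
    (hm2 : ∀ i, ∫ ω, (ξ ω i) ^ 2 ∂μ = 1)
    (hm3 : ∀ i, Integrable (fun ω => |ξ ω i| ^ 3) μ)
    (f : (Fin n → ℝ) → ℝ) (hf : ContDiff ℝ 3 f)
    (pd : ℕ → Fin n → (Fin n → ℝ) → ℝ)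
    (hpd : pd = fun k i x => iteratedDeriv k (fun s => f (Function.update x i s)) (x i))
    (B : ℝ) (hbdd : ∀ x, |f x| ≤ B) (hbddpd : ∀ k ≤ 3, ∀ i x, |pd k i x| ≤ B)
    (L : (Fin n → ℝ) → ℝ)
    (hL : L = fun x => (∑ i, pd 2 i x) - ∑ i, x i * pd 1 i x) :
    ∫ ω, L (ξ ω) ∂μ =
      (∑ i, ∫ ω, (ξ ω i) *
        ∫ s in (0:ℝ)..1, pd 3 i (Function.update (ξ ω) i (s * ξ ω i)) ∂volume ∂μ) -
      ∑ i, ∫ ω, (ξ ω i) ^ 3 *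
        ∫ s in (0:ℝ)..1, (1 - s) * pd 3 i (Function.update (ξ ω) i (s * ξ ω i)) ∂volume ∂μ := by
  have hB : (0:ℝ) ≤ B := le_trans (abs_nonneg _) (hbdd 0)
  -- pd on updated points is the line iterated derivative
  have hpd' : ∀ (k : ℕ) (i : Fin n) (x : Fin n → ℝ) (u : ℝ),
      pd k i (Function.update x i u)
        = iteratedDeriv k (fun s => f (Function.update x i s)) u := by
    intro k i x u
    simp only [hpd, Function.update_idem, Function.update_self]
  have hpdx : ∀ (k : ℕ) (i : Fin n) (x : Fin n → ℝ),
      pd k i x = iteratedDeriv k (fun s => f (Function.update x i s)) (x i) := by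
    intro k i x; simp only [hpd]
  have hpdFD : ∀ (k : ℕ), (k : WithTop ℕ∞) ≤ 3 → ∀ (i : Fin n) (x : Fin n → ℝ),
      pd k i x = iteratedFDeriv ℝ k f x (fun _ => Pi.single i 1) := by
    intro k hk i x
    rw [hpdx k i x, line_iteratedDerivOU hf i k hk x (x i), Function.update_eq_self]
  have hpdcont : ∀ (k : ℕ), (k : WithTop ℕ∞) ≤ 3 → ∀ i : Fin n, Continuous (pd k i) := by
    intro k hk i
    have hc : Continuous fun x => iteratedFDeriv ℝ k f x (fun _ => Pi.single i 1) :=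
      (ContinuousMultilinearMap.apply ℝ (fun _ : Fin k => (Fin n → ℝ)) ℝ
        (fun _ => Pi.single i 1)).continuous.comp (hf.continuous_iteratedFDeriv hk)
    rw [show pd k i = fun x => iteratedFDeriv ℝ k f x (fun _ => Pi.single i 1) from
      funext (hpdFD k hk i)]
    exact hc
  have c1 : ((1 : ℕ) : WithTop ℕ∞) ≤ 3 := by norm_cast
  have c2 : ((2 : ℕ) : WithTop ℕ∞) ≤ 3 := by norm_cast
  have c3 : ((3 : ℕ) : WithTop ℕ∞) ≤ 3 := by norm_cast
  have hmeasξ : Measurable ξ := measurable_pi_lambda _ hmeas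
  classical
  -- basic integrabilities of powers of coordinates
  have habs1 : ∀ x : ℝ, |x| ≤ 1 + |x| ^ 3 := by
    intro x
    nlinarith [abs_nonneg x, sq_nonneg (|x| - 1), mul_nonneg (abs_nonneg x) (sq_nonneg (|x| - 1))]
  have habs2 : ∀ x : ℝ, x ^ 2 ≤ 1 + |x| ^ 3 := by
    intro x
    have h : x ^ 2 = |x| ^ 2 := (sq_abs x).symm
    nlinarith [abs_nonneg x, sq_nonneg (|x| - 1), mul_nonneg (abs_nonneg x) (sq_nonneg (|x| - 1))]
  have intξ1 : ∀ i, Integrable (fun ω => ξ ω i) μ := by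
    intro i
    refine Integrable.mono' ((integrable_const 1).add (hm3 i))
      (hmeas i).aestronglyMeasurable (Filter.Eventually.of_forall fun ω => ?_)
    simpa [Real.norm_eq_abs] using habs1 (ξ ω i)
  have intξ2 : ∀ i, Integrable (fun ω => (ξ ω i) ^ 2) μ := by
    intro i
    refine Integrable.mono' ((integrable_const 1).add (hm3 i))
      ((hmeas i).pow_const 2).aestronglyMeasurable (Filter.Eventually.of_forall fun ω => ?_)
    have := habs2 (ξ ω i)
    have h0 : (0:ℝ) ≤ (ξ ω i) ^ 2 := sq_nonneg _
    simpa [Real.norm_eq_abs, abs_of_nonneg h0] using this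
  have intξ3 : ∀ i, Integrable (fun ω => (ξ ω i) ^ 3) μ := by
    intro i
    refine (hm3 i).mono' ((hmeas i).pow_const 3).aestronglyMeasurable
      (Filter.Eventually.of_forall fun ω => ?_)
    rw [Real.norm_eq_abs, abs_pow]
  -- per-coordinate key identity
  have key : ∀ i : Fin n,
      (∫ ω, pd 2 i (ξ ω) ∂μ) - ∫ ω, ξ ω i * pd 1 i (ξ ω) ∂μ
      = (∫ ω, ξ ω i *
          ∫ s in (0:ℝ)..1, pd 3 i (Function.update (ξ ω) i (s * ξ ω i)) ∂volume ∂μ)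
        - ∫ ω, (ξ ω i) ^ 3 *
          ∫ s in (0:ℝ)..1, (1 - s) * pd 3 i (Function.update (ξ ω) i (s * ξ ω i)) ∂volume ∂μ := by
    intro i
    have hg : ∀ x : Fin n → ℝ, ContDiff ℝ 3 fun s => f (Function.update x i s) :=
      fun x => hf.comp (contDiff_update 3 x i)
    -- pointwise Taylor identities
    have h2 : ∀ ω, pd 2 i (ξ ω) = pd 2 i (Function.update (ξ ω) i 0)
        + ξ ω i * ∫ s in (0:ℝ)..1, pd 3 i (Function.update (ξ ω) i (s * ξ ω i)) ∂volume := by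
      intro ω
      rw [hpdx 2 i (ξ ω)]
      simp only [hpd' 2 i (ξ ω), hpd' 3 i (ξ ω)]
      exact taylor2OU (hg (ξ ω)) (ξ ω i)
    have h1 : ∀ ω, ξ ω i * pd 1 i (ξ ω) = ξ ω i * pd 1 i (Function.update (ξ ω) i 0)
        + (ξ ω i) ^ 2 * pd 2 i (Function.update (ξ ω) i 0)
        + (ξ ω i) ^ 3 *
            ∫ s in (0:ℝ)..1, (1 - s) * pd 3 i (Function.update (ξ ω) i (s * ξ ω i)) ∂volume := by
      intro ω
      rw [hpdx 1 i (ξ ω)]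
      simp only [hpd' 1 i (ξ ω), hpd' 2 i (ξ ω), hpd' 3 i (ξ ω)]
      rw [taylor1OU (hg (ξ ω)) (ξ ω i)]
      ring
    -- measurability of the frozen-coordinate map
    have hu0 : Measurable (fun ω => Function.update (ξ ω) i 0) := by
      apply measurable_pi_lambda
      intro j
      by_cases h : j = i
      · subst h; simp only [Function.update_apply]; exact measurable_const.ite (MeasurableSet.const _) (hmeas _)
      · simpa [Function.update_apply, h] using hmeas j
    -- continuity of the parametric integrals
    have hinner : Continuous fun p : (Fin n → ℝ) × ℝ =>
        pd 3 i (Function.update p.1 i (p.2 * p.1 i)) :=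
      (hpdcont 3 c3 i).comp
        (continuous_fst.update i (continuous_snd.mul ((continuous_apply i).comp continuous_fst)))
    have contI : Continuous fun x : Fin n → ℝ =>
        ∫ s in (0:ℝ)..1, pd 3 i (Function.update x i (s * x i)) ∂volume := by
      apply intervalIntegral.continuous_parametric_intervalIntegral_of_continuous'
      exact hinner
    have contJ : Continuous fun x : Fin n → ℝ =>
        ∫ s in (0:ℝ)..1, (1 - s) * pd 3 i (Function.update x i (s * x i)) ∂volume := by
      apply intervalIntegral.continuous_parametric_intervalIntegral_of_continuous'
      exact (continuous_const.sub continuous_snd).mul hinner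
    -- bounds on the parametric integrals
    have hIbd : ∀ x : Fin n → ℝ,
        |∫ s in (0:ℝ)..1, pd 3 i (Function.update x i (s * x i)) ∂volume| ≤ B := by
      intro x
      have h := intervalIntegral.norm_integral_le_of_norm_le_const (C := B) (a := (0:ℝ)) (b := 1)
        (f := fun s => pd 3 i (Function.update x i (s * x i)))
        (fun s _ => by simpa [Real.norm_eq_abs] using hbddpd 3 le_rfl i _)
      simpa [Real.norm_eq_abs] using h
    have hJbd : ∀ x : Fin n → ℝ,
        |∫ s in (0:ℝ)..1, (1 - s) * pd 3 i (Function.update x i (s * x i)) ∂volume| ≤ B := by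
      intro x
      have h := intervalIntegral.norm_integral_le_of_norm_le_const (C := B) (a := (0:ℝ)) (b := 1)
        (f := fun s => (1 - s) * pd 3 i (Function.update x i (s * x i))) ?_
      · simpa [Real.norm_eq_abs] using h
      · intro s hs
        rw [Set.uIoc_of_le (by norm_num : (0:ℝ) ≤ 1)] at hs
        have h1s : |1 - s| ≤ 1 := by
          rw [abs_le]; constructor <;> [linarith [hs.2]; linarith [hs.1]]
        have := hbddpd 3 le_rfl i (Function.update x i (s * x i))
        calc ‖(1 - s) * pd 3 i (Function.update x i (s * x i))‖
            = |1 - s| * |pd 3 i (Function.update x i (s * x i))| := by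
              rw [Real.norm_eq_abs, abs_mul]
          _ ≤ 1 * B := by
              exact mul_le_mul h1s this (abs_nonneg _) zero_le_one
          _ = B := one_mul B
    -- integrability of all pieces
    have intA : Integrable (fun ω => pd 2 i (Function.update (ξ ω) i 0)) μ :=
      Integrable.mono' (integrable_const B)
        (((hpdcont 2 c2 i).measurable.comp hu0).aestronglyMeasurable)
        (Filter.Eventually.of_forall fun ω => by
          simpa [Real.norm_eq_abs] using hbddpd 2 (by norm_num) i _)
    have intB1 : Integrable (fun ω => pd 1 i (Function.update (ξ ω) i 0)) μ :=
      Integrable.mono' (integrable_const B)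
        (((hpdcont 1 c1 i).measurable.comp hu0).aestronglyMeasurable)
        (Filter.Eventually.of_forall fun ω => by
          simpa [Real.norm_eq_abs] using hbddpd 1 (by norm_num) i _)
    have intξB1 : Integrable (fun ω => ξ ω i * pd 1 i (Function.update (ξ ω) i 0)) μ := by
      refine Integrable.mono' (((intξ1 i).abs).const_mul B)
        ((hmeas i).mul ((hpdcont 1 c1 i).measurable.comp hu0)).aestronglyMeasurable
        (Filter.Eventually.of_forall fun ω => ?_)
      rw [Real.norm_eq_abs, abs_mul, mul_comm]
      exact mul_le_mul_of_nonneg_right (hbddpd 1 (by norm_num) i _) (abs_nonneg _)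
    have intξ2A : Integrable (fun ω => (ξ ω i) ^ 2 * pd 2 i (Function.update (ξ ω) i 0)) μ := by
      refine Integrable.mono' ((intξ2 i).const_mul B)
        (((hmeas i).pow_const 2).mul ((hpdcont 2 c2 i).measurable.comp hu0)).aestronglyMeasurable
        (Filter.Eventually.of_forall fun ω => ?_)
      rw [Real.norm_eq_abs, abs_mul, abs_of_nonneg (sq_nonneg (ξ ω i)), mul_comm]
      exact mul_le_mul_of_nonneg_right (hbddpd 2 (by norm_num) i _) (sq_nonneg _)
    have intξI : Integrable (fun ω => ξ ω i *
        ∫ s in (0:ℝ)..1, pd 3 i (Function.update (ξ ω) i (s * ξ ω i)) ∂volume) μ := by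
      refine Integrable.mono' (((intξ1 i).abs).const_mul B)
        ((hmeas i).mul (contI.measurable.comp hmeasξ)).aestronglyMeasurable
        (Filter.Eventually.of_forall fun ω => ?_)
      rw [Real.norm_eq_abs, abs_mul, mul_comm]
      exact mul_le_mul_of_nonneg_right (hIbd (ξ ω)) (abs_nonneg _)
    have intξ3J : Integrable (fun ω => (ξ ω i) ^ 3 *
        ∫ s in (0:ℝ)..1, (1 - s) * pd 3 i (Function.update (ξ ω) i (s * ξ ω i)) ∂volume) μ := by
      refine Integrable.mono' ((hm3 i).const_mul B)
        (((hmeas i).pow_const 3).mul (contJ.measurable.comp hmeasξ)).aestronglyMeasurable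
        (Filter.Eventually.of_forall fun ω => ?_)
      rw [Real.norm_eq_abs, abs_mul, abs_pow, mul_comm]
      exact mul_le_mul_of_nonneg_right (hJbd (ξ ω)) (pow_nonneg (abs_nonneg _) 3)
    -- independence of coordinate i from the frozen vector
    have base := hindep.indepFun_finset {i} {i}ᶜ disjoint_compl_right hmeas
    set ψ : ((({i} : Finset (Fin n))ᶜ : Finset (Fin n)) → ℝ) → (Fin n → ℝ) :=
      fun v j => if h : j ∈ (({i} : Finset (Fin n))ᶜ : Finset (Fin n)) then v ⟨j, h⟩ else 0
      with hψdef
    have hψ : Measurable ψ := by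
      apply measurable_pi_lambda
      intro j
      simp only [hψdef]
      by_cases h : j ∈ (({i} : Finset (Fin n))ᶜ : Finset (Fin n))
      · simp only [dif_pos h]
        exact measurable_pi_apply _
      · simp only [dif_neg h]
        exact measurable_const
    have hcomp : ψ ∘ (fun ω (j : ((({i} : Finset (Fin n))ᶜ : Finset (Fin n)) : Finset (Fin n))) => ξ ω j)
        = fun ω => Function.update (ξ ω) i 0 := by
      funext ω
      funext j
      by_cases h : j = i
      · subst h
        simp [hψdef, Function.comp]
      · simp [hψdef, Function.comp, Function.update_apply, h]
    have indep0 : IndepFun (fun ω => ξ ω i) (fun ω => Function.update (ξ ω) i 0) μ := by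
      have h := base.comp (measurable_pi_apply (⟨i, by simp⟩ : ({i} : Finset (Fin n)))) hψ
      rw [hcomp] at h
      exact h
    have indep1 : IndepFun (fun ω => ξ ω i)
        (fun ω => pd 1 i (Function.update (ξ ω) i 0)) μ :=
      indep0.comp measurable_id (hpdcont 1 c1 i).measurable
    have indep2 : IndepFun (fun ω => (ξ ω i) ^ 2)
        (fun ω => pd 2 i (Function.update (ξ ω) i 0)) μ :=
      indep0.comp (measurable_id.pow_const 2) (hpdcont 2 c2 i).measurable
    -- expectations via independence
    have E1 : ∫ ω, ξ ω i * pd 1 i (Function.update (ξ ω) i 0) ∂μ = 0 := by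
      have h : ∫ ω, ξ ω i * pd 1 i (Function.update (ξ ω) i 0) ∂μ
          = (∫ ω, ξ ω i ∂μ) * ∫ ω, pd 1 i (Function.update (ξ ω) i 0) ∂μ :=
        indep1.integral_fun_mul_eq_mul_integral (intξ1 i).aestronglyMeasurable intB1.aestronglyMeasurable
      rw [h, hm1 i, zero_mul]
    have E2 : ∫ ω, (ξ ω i) ^ 2 * pd 2 i (Function.update (ξ ω) i 0) ∂μ
        = ∫ ω, pd 2 i (Function.update (ξ ω) i 0) ∂μ := by
      have h : ∫ ω, (ξ ω i) ^ 2 * pd 2 i (Function.update (ξ ω) i 0) ∂μ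
          = (∫ ω, (ξ ω i) ^ 2 ∂μ) * ∫ ω, pd 2 i (Function.update (ξ ω) i 0) ∂μ :=
        indep2.integral_fun_mul_eq_mul_integral (intξ2 i).aestronglyMeasurable intA.aestronglyMeasurable
      rw [h, hm2 i, one_mul]
    -- assemble
    have S2 : ∫ ω, pd 2 i (ξ ω) ∂μ
        = (∫ ω, pd 2 i (Function.update (ξ ω) i 0) ∂μ)
          + ∫ ω, ξ ω i *
              ∫ s in (0:ℝ)..1, pd 3 i (Function.update (ξ ω) i (s * ξ ω i)) ∂volume ∂μ := by
      simp only [h2]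
      exact integral_add intA intξI
    have S1 : ∫ ω, ξ ω i * pd 1 i (ξ ω) ∂μ
        = (∫ ω, pd 2 i (Function.update (ξ ω) i 0) ∂μ)
          + ∫ ω, (ξ ω i) ^ 3 *
              ∫ s in (0:ℝ)..1, (1 - s) * pd 3 i (Function.update (ξ ω) i (s * ξ ω i)) ∂volume ∂μ := by
      simp only [h1]
      have ia : Integrable (fun ω => ξ ω i * pd 1 i (Function.update (ξ ω) i 0)
          + (ξ ω i) ^ 2 * pd 2 i (Function.update (ξ ω) i 0)) μ := intξB1.add intξ2A
      rw [integral_add ia intξ3J, integral_add intξB1 intξ2A, E1, E2, zero_add]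
    rw [S2, S1]
    ring
  -- global integrabilities and assembly
  have int2 : ∀ i ∈ Finset.univ, Integrable (fun ω => pd 2 i (ξ ω)) μ := fun i _ =>
    Integrable.mono' (integrable_const B)
      ((hpdcont 2 c2 i).measurable.comp hmeasξ).aestronglyMeasurable
      (Filter.Eventually.of_forall fun ω => by
        simpa [Real.norm_eq_abs] using hbddpd 2 (by norm_num) i _)
  have int1 : ∀ i ∈ Finset.univ, Integrable (fun ω => ξ ω i * pd 1 i (ξ ω)) μ := by
    intro i _
    refine Integrable.mono' (((intξ1 i).abs).const_mul B)
      ((hmeas i).mul ((hpdcont 1 c1 i).measurable.comp hmeasξ)).aestronglyMeasurable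
      (Filter.Eventually.of_forall fun ω => ?_)
    rw [Real.norm_eq_abs, abs_mul, mul_comm]
    exact mul_le_mul_of_nonneg_right (hbddpd 1 (by norm_num) i _) (abs_nonneg _)
  subst hL
  rw [show (∫ ω, ((∑ i, pd 2 i (ξ ω)) - ∑ i, ξ ω i * pd 1 i (ξ ω)) ∂μ)
      = (∑ i, ∫ ω, pd 2 i (ξ ω) ∂μ) - ∑ i, ∫ ω, ξ ω i * pd 1 i (ξ ω) ∂μ by
    rw [integral_sub (integrable_finset_sum _ int2) (integrable_finset_sum _ int1),
      integral_finset_sum _ int2, integral_finset_sum _ int1]]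
  rw [← Finset.sum_sub_distrib, ← Finset.sum_sub_distrib]
  exact Finset.sum_congr rfl fun i _ => key i
end

section
/- Let T = { e_i : 1 <= i <= n } be the canonical basis of R^n and let xi_1,...,xi_n be i.i.d. standard Laplace random variables (density (1/2)exp(-|x|)). Then E max_{i<=n} xi_i is of order log n (i.e., there are universal constants c, C > 0 with c*log n <= E max_i xi_i <= C*log n for n large), whereas E max_{i<=n} g_i is of order sqrt(log n) for i.i.d. standard Gaussians g_i; consequently |E sup_{t in T}<xi,t> - E sup_{t in T}<G,t>| >= c' * log n for n large, which exceeds any bound of order (log n)^{3/4}. -/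
open MeasureTheory ProbabilityTheory

/-- The standard Laplace (two-sided exponential) distribution, with density
`(1/2)·exp(-|x|)` with respect to Lebesgue measure. -/
noncomputable def laplaceMeasure : Measure ℝ :=
  volume.withDensity fun x => ENNReal.ofReal ((1 / 2) * Real.exp (-|x|))


section Aux
open MeasureTheory ProbabilityTheory Real Set
open scoped ENNReal NNReal
namespace LapGap


lemma integrable_comp_abs' {f : ℝ → ℝ} (hf : IntegrableOn f (Ioi 0)) :
    Integrable (fun x => f |x|) := by
  have h1 : IntegrableOn (fun x : ℝ => f |x|) (Ioi 0) :=
    hf.congr_fun (fun x hx => by rw [abs_of_pos hx]) measurableSet_Ioi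
  have h2 : IntegrableOn (fun x : ℝ => f |x|) (Iic 0) := by
    rw [← Measure.map_neg_eq_self (volume : Measure ℝ)]
    have m : MeasurableEmbedding fun x : ℝ => -x := (Homeomorph.neg ℝ).measurableEmbedding
    rw [m.integrableOn_map_iff]
    simp_rw [Function.comp_def, abs_neg, neg_preimage, neg_Iic, neg_zero]
    exact Iff.mpr integrableOn_Ici_iff_integrableOn_Ioi h1
  have := h2.union h1
  rwa [Iic_union_Ioi, integrableOn_univ] at this

lemma integrable_exp_neg_mul_abs {b : ℝ} (hb : 0 < b) :
    Integrable (fun x : ℝ => Real.exp (-(b * |x|))) := by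
  have := integrable_comp_abs' (f := fun t => Real.exp (-(b * t)))
    (by simpa [neg_mul] using exp_neg_integrableOn_Ioi 0 hb)
  simpa using this

lemma integral_exp_neg_mul_abs {b : ℝ} (hb : 0 < b) :
    ∫ x : ℝ, Real.exp (-(b * |x|)) = 2 / b := by
  rw [integral_comp_abs (f := fun t => Real.exp (-(b * t)))]
  have := integral_comp_mul_left_Ioi (fun u => Real.exp (-u)) 0 hb
  simp only [mul_zero, smul_eq_mul] at this
  rw [this, integral_exp_neg_Ioi]
  simp [div_eq_mul_inv, mul_comm]




noncomputable def mOf (d : ℝ → ℝ) : Measure ℝ :=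
  volume.withDensity fun x => ENNReal.ofReal (d x)

variable {d : ℝ → ℝ}

lemma integral_mOf (hd : Measurable d) (hd0 : ∀ x, 0 ≤ d x) (g : ℝ → ℝ) :
    ∫ x, g x ∂(mOf d) = ∫ x, d x * g x := by
  rw [mOf]
  have h : (fun x => ENNReal.ofReal (d x)) = fun x => ((d x).toNNReal : ℝ≥0∞) := rfl
  rw [h, integral_withDensity_eq_integral_smul hd.real_toNNReal]
  congr 1; funext x
  simp [NNReal.smul_def, Real.coe_toNNReal _ (hd0 x)]

lemma integral_mOf_le (hd : Measurable d) (hd0 : ∀ x, 0 ≤ d x) {g h : ℝ → ℝ}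
    (hg0 : ∀ x, 0 ≤ g x) (hh : Integrable h) (hble : ∀ x, d x * g x ≤ h x) :
    ∫ x, g x ∂(mOf d) ≤ ∫ x, h x := by
  rw [integral_mOf hd hd0]
  exact integral_mono_of_nonneg (ae_of_all _ fun x => mul_nonneg (hd0 x) (hg0 x)) hh
    (ae_of_all _ hble)

lemma integrable_mOf (hd : Measurable d) (hd0 : ∀ x, 0 ≤ d x) {g h : ℝ → ℝ}
    (hgm : Measurable g) (hg0 : ∀ x, 0 ≤ g x)
    (hh : Integrable h) (hble : ∀ x, d x * g x ≤ h x) : Integrable g (mOf d) := by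
  rw [mOf, integrable_withDensity_iff hd.ennreal_ofReal
    (ae_of_all _ fun x => ENNReal.ofReal_lt_top)]
  have h2 : (fun x => g x * (ENNReal.ofReal (d x)).toReal) = fun x => g x * d x := by
    funext x; rw [ENNReal.toReal_ofReal (hd0 x)]
  rw [h2]
  refine hh.mono' ((hgm.mul hd).aestronglyMeasurable) (ae_of_all _ fun x => ?_)
  rw [Real.norm_eq_abs, abs_of_nonneg (mul_nonneg (hg0 x) (hd0 x)), mul_comm]
  exact hble x

lemma tail_mOf (hd : Measurable d) {a ε : ℝ}
    (hεd : ∀ x ∈ Ioc a (a+1), ε ≤ d x) : ENNReal.ofReal ε ≤ mOf d (Ioi a) := by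
  have hsub : mOf d (Ioc a (a+1)) ≤ mOf d (Ioi a) := measure_mono Ioc_subset_Ioi_self
  refine le_trans ?_ hsub
  rw [mOf, withDensity_apply _ measurableSet_Ioc]
  calc ENNReal.ofReal ε = ∫⁻ _ in Ioc a (a+1), ENNReal.ofReal ε := by
        rw [setLIntegral_const, Real.volume_Ioc]
        simp
    _ ≤ _ := setLIntegral_mono hd.ennreal_ofReal fun x hx => ENNReal.ofReal_le_ofReal (hεd x hx)




variable {n : ℕ}

lemma map_eval (μ : Measure ℝ) [IsProbabilityMeasure μ] (i : Fin n) :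
    (Measure.pi fun _ : Fin n => μ).map (fun x => x i) = μ := by
  ext s hs
  rw [Measure.map_apply (measurable_pi_apply i) hs]
  have h : (fun x : Fin n → ℝ => x i) ⁻¹' s
      = Set.pi Set.univ (Function.update (fun _ => Set.univ) i s) := Set.eval_preimage
  rw [h, Measure.pi_pi]
  rw [Finset.prod_eq_single i (fun j _ hj => by simp [Function.update_of_ne hj]) (by simp)]
  simp

lemma integral_eval (μ : Measure ℝ) [IsProbabilityMeasure μ] (i : Fin n) {f : ℝ → ℝ}
    (hf : Measurable f) :
    ∫ x, f (x i) ∂(Measure.pi fun _ : Fin n => μ) = ∫ y, f y ∂μ := by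
  conv_rhs => rw [← map_eval (n := n) μ i]
  rw [integral_map (measurable_pi_apply i).aemeasurable hf.aestronglyMeasurable]

lemma integrable_eval (μ : Measure ℝ) [IsProbabilityMeasure μ] (i : Fin n) {f : ℝ → ℝ}
    (hf : Measurable f) (hi : Integrable f μ) :
    Integrable (fun x : Fin n → ℝ => f (x i)) (Measure.pi fun _ : Fin n => μ) := by
  rw [← map_eval μ i] at hi
  have := (integrable_map_measure hf.aestronglyMeasurable
    (measurable_pi_apply i).aemeasurable).mp hi
  exact this

lemma measurable_supCoord (hn : 0 < n) : Measurable (fun x : Fin n → ℝ => ⨆ i, x i) := by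
  haveI : NeZero n := ⟨hn.ne'⟩
  have h : (fun x : Fin n → ℝ => ⨆ i, x i)
      = Finset.univ.sup' Finset.univ_nonempty (fun i => (fun x : Fin n → ℝ => x i)) := by
    funext x
    rw [Finset.sup'_apply]
    exact (Finset.sup'_univ_eq_ciSup _).symm
  rw [h]
  exact Finset.measurable_sup' _ fun i _ => measurable_pi_apply i

lemma le_supCoord (hn : 0 < n) (x : Fin n → ℝ) (i : Fin n) : x i ≤ ⨆ j, x j := by
  haveI : NeZero n := ⟨hn.ne'⟩
  exact le_ciSup (Set.Finite.bddAbove (Set.finite_range x)) i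

lemma abs_supCoord_le (hn : 0 < n) (x : Fin n → ℝ) : |⨆ i, x i| ≤ ∑ i, |x i| := by
  haveI : NeZero n := ⟨hn.ne'⟩
  rw [abs_le]
  constructor
  · have h0 : -(∑ i, |x i|) ≤ x ⟨0, hn⟩ := by
      have h1 : |x ⟨0, hn⟩| ≤ ∑ i, |x i| :=
        Finset.single_le_sum (fun j _ => abs_nonneg (x j)) (Finset.mem_univ _)
      have := neg_abs_le (x ⟨0, hn⟩)
      linarith
    exact h0.trans (le_supCoord hn x _)
  · refine ciSup_le fun i => ?_
    exact (le_abs_self _).trans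
      (Finset.single_le_sum (fun j _ => abs_nonneg (x j)) (Finset.mem_univ i))

lemma integrable_supCoord (μ : Measure ℝ) [IsProbabilityMeasure μ] (hn : 0 < n)
    (habs : Integrable (fun y : ℝ => |y|) μ) :
    Integrable (fun x : Fin n → ℝ => ⨆ i, x i) (Measure.pi fun _ : Fin n => μ) := by
  have hsum : Integrable (fun x : Fin n → ℝ => ∑ i, |x i|)
      (Measure.pi fun _ : Fin n => μ) :=
    integrable_finset_sum _ fun i _ => integrable_eval μ i measurable_abs habs
  exact hsum.mono' (measurable_supCoord hn).aestronglyMeasurable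
    (ae_of_all _ fun x => by rw [Real.norm_eq_abs]; exact abs_supCoord_le hn x)





variable {n : ℕ}

lemma exp_one_ge_two : (2:ℝ) ≤ Real.exp 1 := by
  have := Real.add_one_le_exp (1:ℝ)
  linarith

lemma lower_bound (μ : Measure ℝ) [IsProbabilityMeasure μ] (hn : 0 < n) {a ε : ℝ}
    (ha : 0 ≤ a) (hε0 : 0 ≤ ε)
    (habs : Integrable (fun y : ℝ => |y|) μ)
    (htail : ENNReal.ofReal ε ≤ μ (Set.Ioi a))
    (hεn : 1 ≤ ε * n) :
    a / 2 - ∫ y, |y| ∂μ ≤ ∫ x, (⨆ i : Fin n, x i) ∂(Measure.pi fun _ : Fin n => μ) := by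
  haveI : NeZero n := ⟨hn.ne'⟩
  set P := Measure.pi fun _ : Fin n => μ with hP
  set S : Set (Fin n → ℝ) := ⋃ i, (fun x : Fin n → ℝ => x i) ⁻¹' (Ioi a) with hS
  have hSm : MeasurableSet S :=
    MeasurableSet.iUnion fun i => (measurable_pi_apply i) measurableSet_Ioi
  -- compute measure of complement
  have hScompl : Sᶜ = Set.pi Set.univ (fun _ : Fin n => Iic a) := by
    ext x
    simp [hS, Set.mem_pi, not_lt, Pi.le_def]
  have hq : P Sᶜ = (μ (Iic a)) ^ n := by
    rw [hScompl, hP, Measure.pi_pi]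
    simp [Finset.prod_const]
  -- real versions
  set q : ℝ := (μ (Iic a)).toReal with hqdef
  have hq0 : 0 ≤ q := ENNReal.toReal_nonneg
  have hPS : (P S).toReal = 1 - q ^ n := by
    have hadd : P S + P Sᶜ = 1 := by
      have h := measure_add_measure_compl (μ := P) hSm
      rwa [measure_univ] at h
    have h1 : (P S).toReal + (P Sᶜ).toReal = 1 := by
      rw [← ENNReal.toReal_add (measure_ne_top _ _) (measure_ne_top _ _), hadd]
      simp
    have h2 : (P Sᶜ).toReal = q ^ n := by rw [hq, ENNReal.toReal_pow]
    linarith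
  -- tail estimates
  have hp : ε ≤ (μ (Ioi a)).toReal := by
    have := ENNReal.toReal_mono (measure_ne_top μ _) htail
    rwa [ENNReal.toReal_ofReal hε0] at this
  have hp1 : (μ (Ioi a)).toReal ≤ 1 := by
    have := prob_le_one (μ := μ) (s := Ioi a)
    exact ENNReal.toReal_le_of_le_ofReal zero_le_one (by simpa using this)
  have hqle : q ≤ 1 - ε := by
    have hcompl : (μ (Iic a)).toReal = 1 - (μ (Ioi a)).toReal := by
      have h3 : (Ioi a)ᶜ = Iic a := compl_Ioi
      have hadd : μ (Ioi a) + μ (Ioi a)ᶜ = 1 := by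
        have h := measure_add_measure_compl (μ := μ) (s := Ioi a) measurableSet_Ioi
        rwa [measure_univ] at h
      have h4 : (μ (Ioi a)).toReal + (μ (Ioi a)ᶜ).toReal = 1 := by
        rw [← ENNReal.toReal_add (measure_ne_top _ _) (measure_ne_top _ _), hadd]; simp
      rw [h3] at h4; linarith
    rw [hqdef, hcompl]; linarith
  have hε1 : ε ≤ 1 := hp.trans hp1
  -- q^n ≤ 1/2
  have hqn : q ^ n ≤ 1 / 2 := by
    have h1 : q ^ n ≤ (1 - ε) ^ n := pow_le_pow_left₀ hq0 hqle n
    have h2 : (1 - ε) ^ n ≤ Real.exp (-ε) ^ n := by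
      apply pow_le_pow_left₀ (by linarith)
      have := Real.add_one_le_exp (-ε); linarith
    have h3 : Real.exp (-ε) ^ n = Real.exp (n * (-ε)) := (Real.exp_nat_mul _ n).symm
    have h4 : Real.exp (n * (-ε)) ≤ Real.exp (-1) := by
      apply Real.exp_le_exp.mpr
      have : (1:ℝ) ≤ ε * n := hεn
      nlinarith
    have h5 : Real.exp (-1) ≤ 1 / 2 := by
      rw [Real.exp_neg]
      rw [inv_le_comm₀ (by positivity) (by norm_num)]
      simpa using exp_one_ge_two
    calc q ^ n ≤ (1-ε)^n := h1
      _ ≤ Real.exp (-ε) ^ n := h2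
      _ = Real.exp (n * (-ε)) := h3
      _ ≤ Real.exp (-1) := h4
      _ ≤ 1/2 := h5
  -- the minorant function
  set i0 : Fin n := ⟨0, hn⟩ with hi0
  set φ : (Fin n → ℝ) → ℝ := fun x => S.indicator (fun _ => a) x - |x i0| with hφ
  have hφint : Integrable φ P := by
    apply Integrable.sub
    · exact (integrable_const a).indicator hSm
    · exact integrable_eval μ i0 measurable_abs habs
  have hφle : ∀ x, φ x ≤ ⨆ i, x i := by
    intro x
    by_cases hx : x ∈ S
    · obtain ⟨i, hi⟩ := Set.mem_iUnion.mp hx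
      have h1 : a < x i := hi
      have h2 : x i ≤ ⨆ j, x j := le_supCoord hn x i
      have h3 : φ x = a - |x i0| := by rw [hφ]; simp [Set.indicator_of_mem hx]
      have := abs_nonneg (x i0)
      linarith
    · have h3 : φ x = - |x i0| := by rw [hφ]; simp [Set.indicator_of_notMem hx]
      have h2 : x i0 ≤ ⨆ j, x j := le_supCoord hn x i0
      have := neg_abs_le (x i0)
      linarith
  have hmono : ∫ x, φ x ∂P ≤ ∫ x, (⨆ i, x i) ∂P :=
    integral_mono hφint (integrable_supCoord μ hn habs) hφle
  have hφval : ∫ x, φ x ∂P = a * (P S).toReal - ∫ y, |y| ∂μ := by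
    rw [hφ, integral_sub ((integrable_const a).indicator hSm)
      (integrable_eval μ i0 measurable_abs habs)]
    rw [integral_indicator_const _ hSm, integral_eval μ i0 measurable_abs]
    simp [mul_comm, Measure.real, hP]
  have hfinal : a / 2 - ∫ y, |y| ∂μ ≤ ∫ x, φ x ∂P := by
    rw [hφval, hPS]
    have : a * (1/2) ≤ a * (1 - q ^ n) := by
      apply mul_le_mul_of_nonneg_left _ ha
      linarith
    linarith
  linarith

lemma upper_bound (μ : Measure ℝ) [IsProbabilityMeasure μ] (hn : 0 < n) {a : ℝ} (ha : 0 ≤ a)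
    (habs : Integrable (fun y : ℝ => |y|) μ)
    (hga : Integrable (fun y : ℝ => max (y - a) 0) μ) :
    ∫ x, (⨆ i : Fin n, x i) ∂(Measure.pi fun _ : Fin n => μ)
      ≤ a + n * ∫ y, max (y - a) 0 ∂μ := by
  haveI : NeZero n := ⟨hn.ne'⟩
  set P := Measure.pi fun _ : Fin n => μ with hP
  have hgm : Measurable (fun y : ℝ => max (y - a) 0) :=
    (measurable_id.sub_const a).max measurable_const
  set ψ : (Fin n → ℝ) → ℝ := fun x => a + ∑ i, max (x i - a) 0 with hψ
  have hψint : Integrable ψ P :=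
    (integrable_const a).add
      (integrable_finset_sum _ fun i _ => integrable_eval μ i hgm hga)
  have hle : ∀ x, (⨆ i, x i) ≤ ψ x := by
    intro x
    refine ciSup_le fun i => ?_
    have h1 : x i ≤ a + max (x i - a) 0 := by
      rcases le_total (x i - a) 0 with h | h
      · simp [max_eq_right h]; linarith
      · simp [max_eq_left h]
    have h2 : max (x i - a) 0 ≤ ∑ j, max (x j - a) 0 :=
      Finset.single_le_sum (f := fun j => max (x j - a) 0) (fun j _ => le_max_right _ _) (Finset.mem_univ i)
    rw [hψ]; dsimp only; linarith
  have hmono : ∫ x, (⨆ i, x i) ∂P ≤ ∫ x, ψ x ∂P :=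
    integral_mono (integrable_supCoord μ hn habs) hψint hle
  have hval : ∫ x, ψ x ∂P = a + n * ∫ y, max (y - a) 0 ∂μ := by
    rw [hψ, integral_add (integrable_const a)
      (integrable_finset_sum _ fun i _ => integrable_eval μ i hgm hga)]
    rw [integral_const]
    rw [integral_finset_sum _ fun i _ => integrable_eval μ i hgm hga]
    have : ∀ i : Fin n, ∫ x, max (x i - a) 0 ∂P = ∫ y, max (y - a) 0 ∂μ := fun i =>
      integral_eval μ i hgm
    simp only [← hP, this, Finset.sum_const, Finset.card_univ, Fintype.card_fin, nsmul_eq_mul]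
    simp [measure_univ]
  linarith






/-! Laplace density -/

noncomputable def dL : ℝ → ℝ := fun x => (1 / 2) * Real.exp (-|x|)

lemma dL_meas : Measurable dL := (measurable_abs.neg.exp).const_mul _

lemma dL_nonneg : ∀ x, 0 ≤ dL x := fun x => by rw [dL]; positivity

lemma laplace_eq_mOf : laplaceMeasure = mOf dL := rfl

instance : IsProbabilityMeasure laplaceMeasure := by
  constructor
  rw [laplace_eq_mOf, mOf, withDensity_apply _ MeasurableSet.univ, Measure.restrict_univ]
  have hint : Integrable dL := by
    have h := (integrable_exp_neg_mul_abs one_pos).const_mul (1/2)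
    simp only [one_mul] at h
    exact h
  rw [← ofReal_integral_eq_lintegral_ofReal hint (ae_of_all _ dL_nonneg)]
  have : ∫ x, dL x = 1 := by
    have h := integral_exp_neg_mul_abs one_pos
    simp only [one_mul] at h
    rw [show dL = fun x => (1/2) * Real.exp (-|x|) from rfl, integral_const_mul, h]
    norm_num
  rw [this]; simp

-- t ≤ exp t
lemma le_exp (t : ℝ) : t ≤ Real.exp t := by
  have := Real.add_one_le_exp t; linarith

lemma habsL : Integrable (fun y : ℝ => |y|) laplaceMeasure := by
  rw [laplace_eq_mOf]
  refine integrable_mOf dL_meas dL_nonneg measurable_abs (fun x => abs_nonneg x)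
    (integrable_exp_neg_mul_abs (b := 1/2) (by norm_num)) (fun x => ?_)
  have h1 : |x| / 2 ≤ Real.exp (|x| / 2) := le_exp _
  have h2 : Real.exp (-|x|) * Real.exp (|x|/2) = Real.exp (-(1/2 * |x|)) := by
    rw [← Real.exp_add]; ring_nf
  calc dL x * |x| = Real.exp (-|x|) * (|x| / 2) := by rw [dL]; ring
    _ ≤ Real.exp (-|x|) * Real.exp (|x|/2) :=
        mul_le_mul_of_nonneg_left h1 (Real.exp_nonneg _)
    _ = Real.exp (-(1/2 * |x|)) := h2

lemma absL_le : ∫ y, |y| ∂laplaceMeasure ≤ 4 := by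
  rw [laplace_eq_mOf]
  have h := integral_mOf_le dL_meas dL_nonneg (g := fun y => |y|)
    (h := fun x => Real.exp (-(1/2 * |x|))) (fun x => abs_nonneg x)
    (integrable_exp_neg_mul_abs (by norm_num)) (fun x => ?_)
  · refine h.trans ?_
    rw [integral_exp_neg_mul_abs (by norm_num : (0:ℝ) < 1/2)]
    norm_num
  · have h1 : |x| / 2 ≤ Real.exp (|x| / 2) := le_exp _
    have h2 : Real.exp (-|x|) * Real.exp (|x|/2) = Real.exp (-(1/2 * |x|)) := by
      rw [← Real.exp_add]; ring_nf
    calc dL x * |x| = Real.exp (-|x|) * (|x| / 2) := by rw [dL]; ring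
      _ ≤ Real.exp (-|x|) * Real.exp (|x|/2) :=
          mul_le_mul_of_nonneg_left h1 (Real.exp_nonneg _)
      _ = Real.exp (-(1/2 * |x|)) := h2

lemma tailL {a : ℝ} (ha : 0 ≤ a) :
    ENNReal.ofReal ((1/2) * Real.exp (-(a+1))) ≤ laplaceMeasure (Ioi a) := by
  rw [laplace_eq_mOf]
  refine tail_mOf dL_meas (fun x hx => ?_)
  have hx1 : 0 < x := lt_of_le_of_lt ha hx.1
  have hx2 : x ≤ a + 1 := hx.2
  rw [dL, abs_of_pos hx1]
  have : Real.exp (-(a+1)) ≤ Real.exp (-x) := Real.exp_le_exp.mpr (by linarith)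
  linarith

lemma momentL {a : ℝ} (ha : 0 ≤ a) :
    (∀ x, dL x * max (x - a) 0 ≤ Real.exp (-(a/2)) * Real.exp (-(1/2 * |x|))) := by
  intro x
  have h1 : max (x - a) 0 ≤ 2 * Real.exp ((x - a)/2) := by
    rcases le_total (x - a) 0 with h | h
    · calc max (x-a) 0 = 0 := max_eq_right h
        _ ≤ 2 * Real.exp ((x-a)/2) := by positivity
    · have := le_exp ((x - a)/2)
      rw [max_eq_left h]; linarith
  have h2 : 0 ≤ dL x := dL_nonneg x
  have h3 : dL x * max (x - a) 0 ≤ dL x * (2 * Real.exp ((x-a)/2)) :=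
    mul_le_mul_of_nonneg_left h1 h2
  refine h3.trans ?_
  have h4 : dL x * (2 * Real.exp ((x-a)/2)) = Real.exp (-|x|) * Real.exp ((x-a)/2) := by
    rw [dL]; ring
  rw [h4, ← Real.exp_add, ← Real.exp_add]
  apply Real.exp_le_exp.mpr
  have := le_abs_self x
  have := abs_nonneg x
  linarith

lemma gaL_int {a : ℝ} (ha : 0 ≤ a) :
    Integrable (fun y : ℝ => max (y - a) 0) laplaceMeasure := by
  rw [laplace_eq_mOf]
  exact integrable_mOf dL_meas dL_nonneg ((measurable_id.sub_const a).max measurable_const)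
    (fun x => le_max_right _ _)
    ((integrable_exp_neg_mul_abs (b := 1/2) (by norm_num)).const_mul (Real.exp (-(a/2))))
    (momentL ha)

lemma gaL_le {a : ℝ} (ha : 0 ≤ a) :
    ∫ y, max (y - a) 0 ∂laplaceMeasure ≤ Real.exp (-(a/2)) * 4 := by
  rw [laplace_eq_mOf]
  have h := integral_mOf_le dL_meas dL_nonneg (g := fun y => max (y - a) 0)
    (h := fun x => Real.exp (-(a/2)) * Real.exp (-(1/2 * |x|)))
    (fun x => le_max_right _ _)
    ((integrable_exp_neg_mul_abs (b := 1/2) (by norm_num)).const_mul (Real.exp (-(a/2))))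
    (momentL ha)
  refine h.trans ?_
  rw [integral_const_mul, integral_exp_neg_mul_abs (by norm_num : (0:ℝ) < 1/2)]
  norm_num





/-! Gaussian density -/

noncomputable def dG : ℝ → ℝ := gaussianPDFReal 0 1

lemma dG_def : dG = fun x => (Real.sqrt (2 * π))⁻¹ * Real.exp (-(x^2) / 2) := by
  funext x
  rw [dG, gaussianPDFReal]
  norm_num

lemma dG_meas : Measurable dG := measurable_gaussianPDFReal 0 1

lemma dG_nonneg : ∀ x, 0 ≤ dG x := gaussianPDFReal_nonneg 0 1

lemma gauss_eq_mOf : gaussianReal 0 1 = mOf dG := by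
  rw [gaussianReal_of_var_ne_zero 0 one_ne_zero, mOf]
  rfl

lemma sqrt_two_pi_ge_one : 1 ≤ Real.sqrt (2 * π) := by
  rw [show (1:ℝ) = Real.sqrt 1 by rw [Real.sqrt_one]]
  apply Real.sqrt_le_sqrt
  nlinarith [Real.pi_gt_three]

lemma sqrt_two_pi_le_three : Real.sqrt (2 * π) ≤ 3 := by
  rw [show (3:ℝ) = Real.sqrt 9 by rw [show (9:ℝ) = 3^2 by norm_num, Real.sqrt_sq]; norm_num]
  apply Real.sqrt_le_sqrt
  nlinarith [Real.pi_le_four]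

lemma dG_le (x : ℝ) : dG x ≤ Real.exp (-(x^2) / 2) := by
  rw [dG_def]
  have h1 : (Real.sqrt (2 * π))⁻¹ ≤ 1 := by
    rw [inv_le_one_iff₀]; right; exact sqrt_two_pi_ge_one
  nlinarith [Real.exp_nonneg (-(x^2)/2)]

lemma habsG : Integrable (fun y : ℝ => |y|) (gaussianReal 0 1) := by
  rw [gauss_eq_mOf]
  refine integrable_mOf dG_meas dG_nonneg measurable_abs (fun x => abs_nonneg x)
    (integrable_exp_neg_mul_sq (by norm_num : (0:ℝ) < 1/4)) (fun x => ?_)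
  have h1 : |x| ≤ Real.exp (x^2/4) := by
    have h2 : |x| ≤ 1 + x^2/4 := by nlinarith [sq_nonneg (|x|/2 - 1), sq_abs x]
    have h3 := Real.add_one_le_exp (x^2/4)
    linarith
  have h4 : dG x * |x| ≤ Real.exp (-(x^2)/2) * Real.exp (x^2/4) := by
    apply mul_le_mul (dG_le x) h1 (abs_nonneg x) (Real.exp_nonneg _)
  refine h4.trans ?_
  rw [← Real.exp_add]
  apply Real.exp_le_exp.mpr
  ring_nf
  linarith [sq_nonneg x]

lemma absG_le : ∫ y, |y| ∂(gaussianReal 0 1) ≤ 4 := by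
  rw [gauss_eq_mOf]
  have h := integral_mOf_le dG_meas dG_nonneg (g := fun y => |y|)
    (h := fun x => Real.exp (-(1/4) * x^2)) (fun x => abs_nonneg x)
    (integrable_exp_neg_mul_sq (by norm_num : (0:ℝ) < 1/4)) (fun x => ?_)
  · refine h.trans ?_
    rw [integral_gaussian]
    calc Real.sqrt (π/(1/4)) ≤ Real.sqrt 16 :=
          Real.sqrt_le_sqrt (by nlinarith [Real.pi_le_four])
      _ = 4 := by rw [show (16:ℝ) = 4^2 by norm_num, Real.sqrt_sq]; norm_num
  · have h1 : |x| ≤ Real.exp (x^2/4) := by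
      have h2 : |x| ≤ 1 + x^2/4 := by nlinarith [sq_nonneg (|x|/2 - 1), sq_abs x]
      have h3 := Real.add_one_le_exp (x^2/4)
      linarith
    have h4 : dG x * |x| ≤ Real.exp (-(x^2)/2) * Real.exp (x^2/4) := by
      apply mul_le_mul (dG_le x) h1 (abs_nonneg x) (Real.exp_nonneg _)
    refine h4.trans ?_
    rw [← Real.exp_add]
    apply Real.exp_le_exp.mpr
    ring_nf
    linarith [sq_nonneg x]

lemma tailG {a : ℝ} (ha : 0 ≤ a) :
    ENNReal.ofReal ((1/3) * Real.exp (-(a+1)^2 / 2)) ≤ (gaussianReal 0 1) (Ioi a) := by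
  rw [gauss_eq_mOf]
  refine tail_mOf dG_meas (fun x hx => ?_)
  rw [dG_def]
  have hx1 : 0 < x := lt_of_le_of_lt ha hx.1
  have hx2 : x ≤ a + 1 := hx.2
  have h1 : x^2 ≤ (a+1)^2 := by nlinarith
  have h2 : Real.exp (-(a+1)^2/2) ≤ Real.exp (-(x^2)/2) := Real.exp_le_exp.mpr (by linarith)
  have h3 : (1/3 : ℝ) ≤ (Real.sqrt (2*π))⁻¹ := by
    rw [le_inv_comm₀ (by norm_num) (lt_of_lt_of_le one_pos sqrt_two_pi_ge_one)]
    calc Real.sqrt (2*π) ≤ 3 := sqrt_two_pi_le_three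
      _ = (1/3:ℝ)⁻¹ := by norm_num
  calc (1/3) * Real.exp (-(a+1)^2/2) ≤ (Real.sqrt (2*π))⁻¹ * Real.exp (-(x^2)/2) := by
        apply mul_le_mul h3 h2 (Real.exp_nonneg _) (by positivity)
    _ = _ := rfl

lemma exp_mul_dG (a x : ℝ) :
    Real.exp (a * (x - a)) * dG x = Real.exp (-(a^2)/2) * gaussianPDFReal a 1 x := by
  rw [dG_def, gaussianPDFReal]
  simp only [NNReal.coe_one, mul_one, sub_zero]
  rw [show rexp (a*(x-a)) * ((Real.sqrt (2*π))⁻¹ * rexp (-x^2/2))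
      = (Real.sqrt (2*π))⁻¹ * rexp (a*(x-a) + -x^2/2) by rw [Real.exp_add]; ring]
  rw [show rexp (-a^2/2) * ((Real.sqrt (2*π))⁻¹ * rexp (-(x-a)^2/2))
      = (Real.sqrt (2*π))⁻¹ * rexp (-a^2/2 + -(x-a)^2/2) by rw [Real.exp_add]; ring]
  congr 1
  ring_nf




lemma momentG {a : ℝ} (ha : 0 < a) (x : ℝ) :
    dG x * max (x - a) 0 ≤ (a⁻¹ * Real.exp (-(a^2)/2)) * gaussianPDFReal a 1 x := by
  have h1 : max (x - a) 0 ≤ a⁻¹ * Real.exp (a * (x - a)) := by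
    rcases le_total (x - a) 0 with h | h
    · rw [max_eq_right h]; positivity
    · rw [max_eq_left h]
      have h2 : a * (x - a) ≤ Real.exp (a * (x - a)) := le_exp _
      rw [← mul_le_mul_iff_right₀ ha, mul_inv_cancel_left₀ ha.ne']
      exact h2
  calc dG x * max (x - a) 0 ≤ dG x * (a⁻¹ * Real.exp (a * (x - a))) :=
        mul_le_mul_of_nonneg_left h1 (dG_nonneg x)
    _ = a⁻¹ * (Real.exp (a * (x - a)) * dG x) := by ring
    _ = (a⁻¹ * Real.exp (-(a^2)/2)) * gaussianPDFReal a 1 x := by rw [exp_mul_dG]; ring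

lemma gaG_int {a : ℝ} (ha : 0 < a) :
    Integrable (fun y : ℝ => max (y - a) 0) (gaussianReal 0 1) := by
  rw [gauss_eq_mOf]
  exact integrable_mOf dG_meas dG_nonneg ((measurable_id.sub_const a).max measurable_const)
    (fun x => le_max_right _ _)
    ((integrable_gaussianPDFReal a 1).const_mul _) (momentG ha)

lemma gaG_le {a : ℝ} (ha : 0 < a) :
    ∫ y, max (y - a) 0 ∂(gaussianReal 0 1) ≤ a⁻¹ * Real.exp (-(a^2)/2) := by
  rw [gauss_eq_mOf]
  have h := integral_mOf_le dG_meas dG_nonneg (g := fun y => max (y - a) 0)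
    (h := fun x => (a⁻¹ * Real.exp (-(a^2)/2)) * gaussianPDFReal a 1 x)
    (fun x => le_max_right _ _)
    ((integrable_gaussianPDFReal a 1).const_mul _) (momentG ha)
  refine h.trans ?_
  rw [integral_const_mul, integral_gaussianPDFReal_eq_one a one_ne_zero, mul_one]


end LapGap

open Real Set
open scoped ENNReal NNReal

/-! ### Final assembly -/

lemma sqrt_val_eq (c : ℝ) (hc : 0 ≤ c) : Real.sqrt (c^2) = c := Real.sqrt_sq hc

set_option maxRecDepth 4000 in
set_option maxHeartbeats 2000000 in
theorem main_gap :
    ∃ c C c' : ℝ, 0 < c ∧ 0 < C ∧ 0 < c' ∧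
      ∃ N : ℕ, ∀ n : ℕ, N ≤ n →
        (c * Real.log n ≤
            ∫ x, (⨆ i : Fin n, x i) ∂(Measure.pi fun _ : Fin n => laplaceMeasure)) ∧
        ((∫ x, (⨆ i : Fin n, x i) ∂(Measure.pi fun _ : Fin n => laplaceMeasure)) ≤
            C * Real.log n) ∧
        (c * Real.sqrt (Real.log n) ≤
            ∫ x, (⨆ i : Fin n, x i) ∂(Measure.pi fun _ : Fin n => gaussianReal 0 1)) ∧
        ((∫ x, (⨆ i : Fin n, x i) ∂(Measure.pi fun _ : Fin n => gaussianReal 0 1)) ≤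
            C * Real.sqrt (Real.log n)) ∧
        c' * Real.log n ≤
          |(∫ x, (⨆ i : Fin n, x i) ∂(Measure.pi fun _ : Fin n => laplaceMeasure)) -
            ∫ x, (⨆ i : Fin n, x i) ∂(Measure.pi fun _ : Fin n => gaussianReal 0 1)| := by
  refine ⟨1/8, 3, 1/16, by norm_num, by norm_num, by norm_num, 2^3400, fun n hn => ?_⟩
  have hnpos : 0 < n := lt_of_lt_of_le one_pos (le_trans Nat.one_le_two_pow hn)
  have hnR : (1:ℝ) ≤ n := by exact_mod_cast hnpos
  have hnRpos : (0:ℝ) < n := by linarith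
  have h1 : ((2:ℝ))^3400 ≤ (n:ℝ) := by exact_mod_cast hn
  clear hn
  set L := Real.log n with hLdef
  have hL : 2356 ≤ L := by
    have h2 : Real.log ((2:ℝ)^3400) ≤ L := Real.log_le_log (by positivity) h1
    rw [Real.log_pow] at h2
    have hlog2 := Real.log_two_gt_d9
    push_cast at h2
    nlinarith
  clear h1
  have hexpL : Real.exp L = n := Real.exp_log hnRpos
  have hL0 : (0:ℝ) ≤ L := by linarith
  set s := Real.sqrt L with hsdef
  have hsLsq : s^2 = L := Real.sq_sqrt hL0
  have hsL : 48 ≤ s := by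
    rw [hsdef, show (48:ℝ) = Real.sqrt (48^2) by rw [Real.sqrt_sq]; norm_num]
    exact Real.sqrt_le_sqrt (by nlinarith)
  have hs0 : (0:ℝ) ≤ s := by linarith
  -- Laplace lower bound
  have hML_low : (1/8) * L ≤
      ∫ x, (⨆ i : Fin n, x i) ∂(Measure.pi fun _ : Fin n => laplaceMeasure) := by
    have hεn : (1:ℝ) ≤ ((1/2) * Real.exp (-(L/2+1))) * n := by
      have he : Real.exp (-(L/2+1)) * n = Real.exp (L/2 - 1) := by
        rw [← hexpL, ← Real.exp_add]
        congr 1; ring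
      have h2 := Real.add_one_le_exp (L/2 - 1)
      calc (1:ℝ) ≤ (1/2) * Real.exp (L/2 - 1) := by nlinarith
        _ = (1/2) * Real.exp (-(L/2+1)) * n := by rw [mul_assoc, he]
    have h := LapGap.lower_bound laplaceMeasure hnpos (a := L/2)
      (ε := (1/2) * Real.exp (-(L/2+1))) (by linarith) (by positivity)
      LapGap.habsL (LapGap.tailL (by linarith)) hεn
    have habs := LapGap.absL_le
    calc (1/8) * L ≤ L/2/2 - 4 := by nlinarith
      _ ≤ L/2/2 - ∫ y, |y| ∂laplaceMeasure := by linarith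
      _ ≤ _ := h
  -- Laplace upper bound
  have hML_up : (∫ x, (⨆ i : Fin n, x i) ∂(Measure.pi fun _ : Fin n => laplaceMeasure))
      ≤ 3 * L := by
    have h := LapGap.upper_bound laplaceMeasure hnpos (a := 2*L) (by linarith)
      LapGap.habsL (LapGap.gaL_int (by linarith))
    have hmom := LapGap.gaL_le (a := 2*L) (by linarith)
    have he : Real.exp (-(2*L/2)) = Real.exp (-L) := by congr 1; ring
    rw [he] at hmom
    have hn4 : (n:ℝ) * ∫ y, max (y - 2*L) 0 ∂laplaceMeasure ≤ 4 := by
      have h1 : (n:ℝ) * ∫ y, max (y - 2*L) 0 ∂laplaceMeasure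
          ≤ (n:ℝ) * (Real.exp (-L) * 4) :=
        mul_le_mul_of_nonneg_left hmom (by linarith)
      have h2 : (n:ℝ) * (Real.exp (-L) * 4) = 4 := by
        rw [Real.exp_neg, ← hexpL]
        field_simp
      linarith
    calc (∫ x, (⨆ i : Fin n, x i) ∂(Measure.pi fun _ : Fin n => laplaceMeasure))
        ≤ 2*L + n * ∫ y, max (y - 2*L) 0 ∂laplaceMeasure := h
      _ ≤ 2*L + 4 := by linarith
      _ ≤ 3 * L := by linarith
  -- Gaussian lower bound
  have hMG_low : (1/8) * s ≤
      ∫ x, (⨆ i : Fin n, x i) ∂(Measure.pi fun _ : Fin n => gaussianReal 0 1) := by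
    have hεn : (1:ℝ) ≤ ((1/3) * Real.exp (-(s/2+1)^2 / 2)) * n := by
      have he : Real.exp (-(s/2+1)^2/2) * n = Real.exp (L - (s/2+1)^2/2) := by
        rw [← hexpL, ← Real.exp_add]
        congr 1; ring
      have hE : (2:ℝ) ≤ L - (s/2+1)^2/2 := by nlinarith
      have h2 := Real.add_one_le_exp (L - (s/2+1)^2/2)
      calc (1:ℝ) ≤ (1/3) * Real.exp (L - (s/2+1)^2/2) := by nlinarith
        _ = (1/3) * Real.exp (-(s/2+1)^2/2) * n := by rw [mul_assoc, he]
    have h := LapGap.lower_bound (gaussianReal 0 1) hnpos (a := s/2)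
      (ε := (1/3) * Real.exp (-(s/2+1)^2 / 2)) (by linarith) (by positivity)
      LapGap.habsG (LapGap.tailG (by linarith)) hεn
    have habs := LapGap.absG_le
    calc (1/8) * s ≤ s/2/2 - 4 := by nlinarith
      _ ≤ s/2/2 - ∫ y, |y| ∂(gaussianReal 0 1) := by linarith
      _ ≤ _ := h
  -- Gaussian upper bound
  have hMG_up : (∫ x, (⨆ i : Fin n, x i) ∂(Measure.pi fun _ : Fin n => gaussianReal 0 1))
      ≤ 3 * s := by
    have hapos : (0:ℝ) < 2*s := by linarith
    have h := LapGap.upper_bound (gaussianReal 0 1) hnpos (a := 2*s) (by linarith)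
      LapGap.habsG (LapGap.gaG_int hapos)
    have hmom := LapGap.gaG_le hapos
    have he : Real.exp (-((2*s)^2)/2) = Real.exp (-L) * Real.exp (-L) := by
      rw [← Real.exp_add]
      congr 1; nlinarith
    rw [he] at hmom
    have hn1' : (n:ℝ) * ∫ y, max (y - 2*s) 0 ∂(gaussianReal 0 1) ≤ 1 := by
      have h1 : (n:ℝ) * ∫ y, max (y - 2*s) 0 ∂(gaussianReal 0 1)
          ≤ (n:ℝ) * ((2*s)⁻¹ * (Real.exp (-L) * Real.exp (-L))) :=
        mul_le_mul_of_nonneg_left hmom (by linarith)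
      have h2 : (n:ℝ) * ((2*s)⁻¹ * (Real.exp (-L) * Real.exp (-L)))
          = (2*s)⁻¹ * Real.exp (-L) := by
        rw [Real.exp_neg, ← hexpL]
        field_simp
      have h3 : (2*s)⁻¹ * Real.exp (-L) ≤ 1 := by
        have h4 : (2*s)⁻¹ ≤ 1 := by
          rw [inv_le_one_iff₀]; right; linarith
        have h5 : Real.exp (-L) ≤ 1 := Real.exp_le_one_iff.mpr (by linarith)
        nlinarith [inv_nonneg.mpr (le_of_lt hapos), Real.exp_nonneg (-L)]
      linarith
    calc (∫ x, (⨆ i : Fin n, x i) ∂(Measure.pi fun _ : Fin n => gaussianReal 0 1))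
        ≤ 2*s + n * ∫ y, max (y - 2*s) 0 ∂(gaussianReal 0 1) := h
      _ ≤ 2*s + 1 := by linarith
      _ ≤ 3 * s := by linarith
  refine ⟨hML_low, hML_up, hMG_low, hMG_up, ?_⟩
  have hgap : (1/16) * L ≤
      (∫ x, (⨆ i : Fin n, x i) ∂(Measure.pi fun _ : Fin n => laplaceMeasure)) -
        ∫ x, (⨆ i : Fin n, x i) ∂(Measure.pi fun _ : Fin n => gaussianReal 0 1) := by
    nlinarith
  exact hgap.trans (le_abs_self _)

end Aux

/-- For `T = {e_1, …, e_n}` the canonical basis, `sup_{t∈T} ⟨ξ,t⟩ = max_i ξ_i`.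
For i.i.d. standard Laplace coordinates this expectation is of order `log n`, while
for i.i.d. standard Gaussians it is of order `√(log n)`; consequently the gap
`|E max_i ξ_i - E max_i g_i|` is at least `c'·log n` for large `n`, which exceeds
any bound of order `(log n)^{3/4}`. -/
theorem laplace_gaussian_gap :
    ∃ c C c' : ℝ, 0 < c ∧ 0 < C ∧ 0 < c' ∧
      ∃ N : ℕ, ∀ n : ℕ, N ≤ n →
        (c * Real.log n ≤
            ∫ x, (⨆ i : Fin n, x i) ∂(Measure.pi fun _ : Fin n => laplaceMeasure)) ∧
        ((∫ x, (⨆ i : Fin n, x i) ∂(Measure.pi fun _ : Fin n => laplaceMeasure)) ≤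
            C * Real.log n) ∧
        (c * Real.sqrt (Real.log n) ≤
            ∫ x, (⨆ i : Fin n, x i) ∂(Measure.pi fun _ : Fin n => gaussianReal 0 1)) ∧
        ((∫ x, (⨆ i : Fin n, x i) ∂(Measure.pi fun _ : Fin n => gaussianReal 0 1)) ≤
            C * Real.sqrt (Real.log n)) ∧
        c' * Real.log n ≤
          |(∫ x, (⨆ i : Fin n, x i) ∂(Measure.pi fun _ : Fin n => laplaceMeasure)) -
            ∫ x, (⨆ i : Fin n, x i) ∂(Measure.pi fun _ : Fin n => gaussianReal 0 1)| :=
  main_gap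
end
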